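/- arXiv:1509.02178 — 9 statements merged into one kernel-verified Lean document; each statement's English description precedes it below -/
import Mathlib

section
/- Let κ : [0,L] → ℝ be continuous and let 𝔰_κ : [0,L] → ℝ be the unique solution of v'' + κv = 0 with v(0) = 0 and v'(0) = 1. Let κ' : [0,L] → ℝ be continuous with κ' ≥ κ on [0,L], and suppose 𝔰_{κ'} > 0 on (0,L]. Then 𝔰_κ ≥ 𝔰_{κ'} on [0,L]. -/
open Set

/-- `s` is the generalized sin-function for curvature `κ` on `[0, L]`:
the solution of `v'' + κ v = 0` with `v 0 = 0`, `v' 0 = 1`, with `s'` its derivative. -/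
def IsSinSolution (κ s s' : ℝ → ℝ) (L : ℝ) : Prop :=
  s 0 = 0 ∧ s' 0 = 1 ∧
    ∀ x ∈ Set.Icc (0:ℝ) L, HasDerivAt s (s' x) x ∧ HasDerivAt s' (-(κ x * s x)) x

/-- J.C.F. Sturm's comparison theorem: if `κ' ≥ κ` and `𝔰_{κ'} > 0` on `(0, L]`,
then `𝔰_κ ≥ 𝔰_{κ'}` on `[0, L]`. -/
theorem sturm_comparison (L : ℝ) (hL : 0 < L)
    (κ κ' s s' t t' : ℝ → ℝ)
    (hκ : ContinuousOn κ (Icc 0 L)) (hκ' : ContinuousOn κ' (Icc 0 L))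
    (hge : ∀ x ∈ Icc (0:ℝ) L, κ x ≤ κ' x)
    (hs : IsSinSolution κ s s' L) (ht : IsSinSolution κ' t t' L)
    (htpos : ∀ x ∈ Ioc (0:ℝ) L, 0 < t x) :
    ∀ x ∈ Icc (0:ℝ) L, t x ≤ s x := by
  obtain ⟨hs0, hs'0, hsd⟩ := hs
  obtain ⟨ht0, ht'0, htd⟩ := ht
  have h0L : (0:ℝ) ∈ Icc (0:ℝ) L := ⟨le_refl 0, hL.le⟩
  -- continuity of the four functions on `Icc 0 L`
  have hscont : ContinuousOn s (Icc 0 L) :=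
    fun x hx => ((hsd x hx).1.continuousAt).continuousWithinAt
  have hs'cont : ContinuousOn s' (Icc 0 L) :=
    fun x hx => ((hsd x hx).2.continuousAt).continuousWithinAt
  have htcont : ContinuousOn t (Icc 0 L) :=
    fun x hx => ((htd x hx).1.continuousAt).continuousWithinAt
  have ht'cont : ContinuousOn t' (Icc 0 L) :=
    fun x hx => ((htd x hx).2.continuousAt).continuousWithinAt
  -- nonnegativity of t
  have htnn : ∀ x ∈ Icc (0:ℝ) L, 0 ≤ t x := by
    intro x hx
    rcases eq_or_lt_of_le hx.1 with h | h
    · rw [← h, ht0]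
    · exact (htpos x ⟨h, hx.2⟩).le
  -- Wronskian estimate: if `s ≥ 0` on `[0, c]`, then `s t' - s' t ≤ 0` on `[0, c]`
  have hW : ∀ c ∈ Icc (0:ℝ) L, (∀ x ∈ Icc (0:ℝ) c, 0 ≤ s x) →
      ∀ x ∈ Icc (0:ℝ) c, s x * t' x - s' x * t x ≤ 0 := by
    intro c hc hsnn x hx
    have hsub : Icc (0:ℝ) c ⊆ Icc 0 L := Icc_subset_Icc_right hc.2
    have hWd : ∀ y ∈ Ioo (0:ℝ) c,
        HasDerivAt (fun z => s z * t' z - s' z * t z) ((κ y - κ' y) * (s y * t y)) y := by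
      intro y hy
      have hyL : y ∈ Icc (0:ℝ) L := hsub (Ioo_subset_Icc_self hy)
      have h1 : HasDerivAt (fun z => s z * t' z - s' z * t z) _ y :=
        ((hsd y hyL).1.mul (htd y hyL).2).sub ((hsd y hyL).2.mul (htd y hyL).1)
      convert h1 using 1
      ring
    have hanti : AntitoneOn (fun z => s z * t' z - s' z * t z) (Icc 0 c) := by
      apply antitoneOn_of_deriv_nonpos (convex_Icc 0 c)
      · exact ((hscont.mono hsub).mul (ht'cont.mono hsub)).sub
          ((hs'cont.mono hsub).mul (htcont.mono hsub))
      · intro y hy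
        rw [interior_Icc] at hy
        exact (hWd y hy).differentiableAt.differentiableWithinAt
      · intro y hy
        rw [interior_Icc] at hy
        rw [(hWd y hy).deriv]
        have hyL : y ∈ Icc (0:ℝ) L := hsub (Ioo_subset_Icc_self hy)
        have h1 : κ y - κ' y ≤ 0 := by linarith [hge y hyL]
        have h2 : 0 ≤ s y * t y :=
          mul_nonneg (hsnn y (Ioo_subset_Icc_self hy)) (htnn y hyL)
        exact mul_nonpos_of_nonpos_of_nonneg h1 h2
    have h0c : (0:ℝ) ∈ Icc (0:ℝ) c := ⟨le_refl 0, hx.1.trans hx.2⟩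
    have := hanti h0c hx hx.1
    simpa [hs0, ht0] using this
  -- slope limits at 0
  have hslope : Filter.Tendsto (fun y => s y / y) (nhdsWithin 0 (Ioi 0)) (nhds 1) := by
    have h1 : Filter.Tendsto (slope s 0) (nhdsWithin 0 {0}ᶜ) (nhds 1) := by
      have := (hsd 0 h0L).1
      rw [hs'0] at this
      exact hasDerivAt_iff_tendsto_slope.mp this
    have h2 : (fun y => s y / y) = slope s 0 := by
      funext y
      simp [slope_def_field, hs0]
    rw [h2]
    exact h1.mono_left (nhdsWithin_mono _ (fun y hy => ne_of_gt hy))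
  have htslope : Filter.Tendsto (fun y => t y / y) (nhdsWithin 0 (Ioi 0)) (nhds 1) := by
    have h1 : Filter.Tendsto (slope t 0) (nhdsWithin 0 {0}ᶜ) (nhds 1) := by
      have := (htd 0 h0L).1
      rw [ht'0] at this
      exact hasDerivAt_iff_tendsto_slope.mp this
    have h2 : (fun y => t y / y) = slope t 0 := by
      funext y
      simp [slope_def_field, ht0]
    rw [h2]
    exact h1.mono_left (nhdsWithin_mono _ (fun y hy => ne_of_gt hy))
  -- s is positive on some right neighborhood of 0
  obtain ⟨ε₀, hε₀, hε₀s⟩ : ∃ ε₀ > 0, ∀ y ∈ Ioc (0:ℝ) ε₀, 0 < s y := by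
    have hev : ∀ᶠ y in nhdsWithin 0 (Ioi (0:ℝ)), 0 < s y / y := by
      apply hslope.eventually
      exact eventually_gt_nhds one_pos
    have hev2 : ∀ᶠ y in nhdsWithin 0 (Ioi (0:ℝ)), 0 < s y := by
      filter_upwards [hev, self_mem_nhdsWithin] with y h1 h2
      have := (div_pos_iff).mp h1
      rcases this with ⟨h, _⟩ | ⟨_, h⟩
      · exact h
      · exact absurd h2 (not_lt.mpr h.le)
    rw [Filter.eventually_iff] at hev2
    obtain ⟨u, hu, husub⟩ := mem_nhdsGT_iff_exists_Ioc_subset.mp hev2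
    exact ⟨u, hu, fun y hy => husub hy⟩
  -- main positivity claim: s > 0 on (0, L]
  have hspos : ∀ x ∈ Ioc (0:ℝ) L, 0 < s x := by
    by_contra hcon
    push_neg at hcon
    obtain ⟨z, hz, hzs⟩ := hcon
    have hε₀z : ε₀ < z := by
      by_contra h
      push_neg at h
      exact absurd (hε₀s z ⟨hz.1, h⟩) (not_lt.mpr hzs)
    -- least zero of s in [ε₀, L]
    set S := Icc ε₀ L ∩ s ⁻¹' (Iic 0) with hS
    have hScl : IsClosed S :=
      (hscont.mono (Icc_subset_Icc_left hε₀.le)).preimage_isClosed_of_isClosed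
        isClosed_Icc isClosed_Iic
    have hScomp : IsCompact S :=
      (isCompact_Icc (a := ε₀) (b := L)).of_isClosed_subset hScl inter_subset_left
    have hSne : S.Nonempty := ⟨z, ⟨hε₀z.le, hz.2⟩, hzs⟩
    obtain ⟨x₀, hx₀S, hx₀least⟩ := hScomp.exists_isLeast hSne
    have hx₀pos : 0 < x₀ := lt_of_lt_of_le hε₀ hx₀S.1.1
    have hx₀L : x₀ ∈ Icc (0:ℝ) L := ⟨hx₀pos.le, hx₀S.1.2⟩
    have hx₀s : s x₀ ≤ 0 := hx₀S.2
    -- s > 0 on (0, x₀)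
    have hposlt : ∀ y ∈ Ioo (0:ℝ) x₀, 0 < s y := by
      intro y hy
      rcases le_or_gt y ε₀ with h | h
      · exact hε₀s y ⟨hy.1, h⟩
      · by_contra hne
        push_neg at hne
        have hyS : y ∈ S := ⟨⟨h.le, hy.2.le.trans hx₀S.1.2⟩, hne⟩
        exact absurd (hx₀least hyS) (not_le.mpr hy.2)
    -- s x₀ = 0
    have hsx₀ : s x₀ = 0 := by
      have hca : ContinuousAt s x₀ := (hsd x₀ hx₀L).1.continuousAt
      have htend : Filter.Tendsto s (nhdsWithin x₀ (Iio x₀)) (nhds (s x₀)) :=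
        hca.continuousWithinAt.tendsto
      have hge0 : 0 ≤ s x₀ := by
        refine ge_of_tendsto htend ?_
        filter_upwards [Ioo_mem_nhdsLT_of_mem ⟨hx₀pos, le_refl x₀⟩] with y hy
        exact (hposlt y hy).le
      linarith
    -- s' x₀ ≤ 0
    have hs'x₀ : s' x₀ ≤ 0 := by
      have h1 : Filter.Tendsto (slope s x₀) (nhdsWithin x₀ {x₀}ᶜ) (nhds (s' x₀)) :=
        hasDerivAt_iff_tendsto_slope.mp (hsd x₀ hx₀L).1
      have h2 : Filter.Tendsto (slope s x₀) (nhdsWithin x₀ (Iio x₀)) (nhds (s' x₀)) :=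
        h1.mono_left (nhdsWithin_mono _ (fun y hy => ne_of_lt hy))
      refine le_of_tendsto h2 ?_
      filter_upwards [Ioo_mem_nhdsLT_of_mem ⟨hx₀pos, le_refl x₀⟩] with y hy
      rw [slope_def_field, hsx₀]
      apply div_nonpos_of_nonneg_of_nonpos
      · simpa using (hposlt y hy).le
      · linarith [hy.2]
    -- Wronskian at x₀ forces s' x₀ = 0
    have hsnn : ∀ y ∈ Icc (0:ℝ) x₀, 0 ≤ s y := by
      intro y hy
      rcases eq_or_lt_of_le hy.1 with h | h
      · rw [← h, hs0]
      · rcases eq_or_lt_of_le hy.2 with h2 | h2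
        · rw [h2, hsx₀]
        · exact (hposlt y ⟨h, h2⟩).le
    have hWx₀ := hW x₀ hx₀L hsnn x₀ ⟨hx₀pos.le, le_refl x₀⟩
    rw [hsx₀] at hWx₀
    have htx₀ : 0 < t x₀ := htpos x₀ ⟨hx₀pos, hx₀S.1.2⟩
    have hs'x₀0 : s' x₀ = 0 := by nlinarith
    -- Grönwall backward uniqueness: contradiction with s' 0 = 1
    obtain ⟨M, hM⟩ := (isCompact_Icc (a := (0:ℝ)) (b := L)).exists_bound_of_continuousOn hκ
    set K := max 1 M with hK
    set g : ℝ → ℝ × ℝ := fun y => (s (x₀ - y), s' (x₀ - y)) with hg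
    set g' : ℝ → ℝ × ℝ := fun y => (-(s' (x₀ - y)), κ (x₀ - y) * s (x₀ - y)) with hg'
    have hgd : ∀ y ∈ Icc (0:ℝ) x₀, HasDerivAt g (g' y) y := by
      intro y hy
      have hmem : x₀ - y ∈ Icc (0:ℝ) L := ⟨by linarith [hy.2], by linarith [hy.1, hx₀L.2]⟩
      have hinner : HasDerivAt (fun z : ℝ => x₀ - z) (-1) y := by
        simpa using (hasDerivAt_id y).const_sub x₀
      have h1 : HasDerivAt (fun z => s (x₀ - z)) (s' (x₀ - y) * (-1)) y :=
        (hsd _ hmem).1.comp y hinner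
      have h2 : HasDerivAt (fun z => s' (x₀ - z)) (-(κ (x₀ - y) * s (x₀ - y)) * (-1)) y :=
        (hsd _ hmem).2.comp y hinner
      have e1 : s' (x₀ - y) * (-1) = -(s' (x₀ - y)) := by ring
      have e2 : -(κ (x₀ - y) * s (x₀ - y)) * (-1) = κ (x₀ - y) * s (x₀ - y) := by ring
      rw [e1] at h1
      rw [e2] at h2
      exact h1.prodMk h2
    have hgcont : ContinuousOn g (Icc 0 x₀) :=
      fun y hy => (hgd y hy).continuousAt.continuousWithinAt
    have hbound : ∀ y ∈ Ico (0:ℝ) x₀, ‖g' y‖ ≤ K * ‖g y‖ + 0 := by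
      intro y hy
      have hmem : x₀ - y ∈ Icc (0:ℝ) L := ⟨by linarith [hy.2.le], by linarith [hy.1, hx₀L.2]⟩
      have hκb : |κ (x₀ - y)| ≤ M := by simpa [Real.norm_eq_abs] using hM (x₀ - y) hmem
      have hK1 : (1:ℝ) ≤ K := le_max_left 1 M
      have hKM : M ≤ K := le_max_right 1 M
      have hgn : ‖g y‖ = max |s (x₀ - y)| |s' (x₀ - y)| := by
        simp [hg, Prod.norm_def, Real.norm_eq_abs]
      have hg'n : ‖g' y‖ = max |s' (x₀ - y)| (|κ (x₀ - y)| * |s (x₀ - y)|) := by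
        simp [hg', Prod.norm_def, Real.norm_eq_abs, abs_mul]
      rw [hgn, hg'n, add_zero]
      have hmax0 : 0 ≤ max |s (x₀ - y)| |s' (x₀ - y)| :=
        le_trans (abs_nonneg _) (le_max_left _ _)
      apply max_le
      · calc |s' (x₀ - y)| ≤ max |s (x₀ - y)| |s' (x₀ - y)| := le_max_right _ _
          _ = 1 * max |s (x₀ - y)| |s' (x₀ - y)| := (one_mul _).symm
          _ ≤ K * max |s (x₀ - y)| |s' (x₀ - y)| := by
              apply mul_le_mul_of_nonneg_right hK1 hmax0
      · calc |κ (x₀ - y)| * |s (x₀ - y)| ≤ K * |s (x₀ - y)| := by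
              apply mul_le_mul_of_nonneg_right (hκb.trans hKM) (abs_nonneg _)
          _ ≤ K * max |s (x₀ - y)| |s' (x₀ - y)| := by
              apply mul_le_mul_of_nonneg_left (le_max_left _ _) (by linarith)
    have hga : ‖g 0‖ ≤ 0 := by
      simp [hg, sub_zero, hsx₀, hs'x₀0, Prod.norm_def]
    have hfinal := norm_le_gronwallBound_of_norm_deriv_right_le hgcont
      (fun y hy => (hgd y (Ico_subset_Icc_self hy)).hasDerivWithinAt) hga hbound
      x₀ ⟨hx₀pos.le, le_refl x₀⟩
    rw [gronwallBound_ε0_δ0] at hfinal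
    have : g x₀ = ((0:ℝ), (1:ℝ)) := by simp [hg, hs0, hs'0]
    rw [this] at hfinal
    simp [Prod.norm_def] at hfinal
    linarith
  -- s ≥ 0 on [0, L], hence the Wronskian inequality holds on all of [0, L]
  have hsnnL : ∀ x ∈ Icc (0:ℝ) L, 0 ≤ s x := by
    intro x hx
    rcases eq_or_lt_of_le hx.1 with h | h
    · rw [← h, hs0]
    · exact (hspos x ⟨h, hx.2⟩).le
  have hWL := hW L ⟨hL.le, le_refl L⟩ hsnnL
  -- s / t is monotone on (0, L]
  have humono : MonotoneOn (fun x => s x / t x) (Ioc 0 L) := by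
    apply monotoneOn_of_deriv_nonneg (convex_Ioc 0 L)
    · exact ((hscont.mono Ioc_subset_Icc_self).div (htcont.mono Ioc_subset_Icc_self))
        (fun x hx => (htpos x hx).ne')
    · intro x hx
      rw [interior_Ioc] at hx
      have hxL : x ∈ Icc (0:ℝ) L := ⟨hx.1.le, hx.2.le⟩
      exact (((hsd x hxL).1.div (htd x hxL).1
        (htpos x ⟨hx.1, hx.2.le⟩).ne')).differentiableAt.differentiableWithinAt
    · intro x hx
      rw [interior_Ioc] at hx
      have hxL : x ∈ Icc (0:ℝ) L := ⟨hx.1.le, hx.2.le⟩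
      have hd : HasDerivAt (fun x => s x / t x) _ x := (hsd x hxL).1.div (htd x hxL).1 (htpos x ⟨hx.1, hx.2.le⟩).ne'
      rw [hd.deriv]
      apply div_nonneg _ (sq_nonneg _)
      linarith [hWL x hxL]
  -- the quotient tends to 1 at 0⁺
  have hu1 : Filter.Tendsto (fun y => s y / t y) (nhdsWithin 0 (Ioi 0)) (nhds 1) := by
    have hdiv := hslope.div htslope one_ne_zero
    rw [div_one] at hdiv
    refine hdiv.congr' ?_
    filter_upwards [self_mem_nhdsWithin] with y hy
    have hy0 : (y:ℝ) ≠ 0 := ne_of_gt hy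
    rcases eq_or_ne (t y) 0 with h | h
    · simp [h]
    · simp only [Pi.div_apply]
      field_simp
  -- conclusion
  intro x hx
  rcases eq_or_lt_of_le hx.1 with h | h
  · rw [← h, hs0, ht0]
  · have hx' : x ∈ Ioc (0:ℝ) L := ⟨h, hx.2⟩
    have h1le : 1 ≤ s x / t x := by
      refine le_of_tendsto hu1 ?_
      filter_upwards [Ioc_mem_nhdsGT_of_mem ⟨le_refl 0, h⟩] with y hy
      exact humono ⟨hy.1, hy.2.trans hx.2⟩ hx' hy.2
    have htx : 0 < t x := htpos x hx'
    rw [le_div_iff₀ htx, one_mul] at h1le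
    exact h1le
end

section
/- Let κ : [0,θ] → ℝ be continuous with 𝔰_κ > 0 on (0,θ]. Then for all t ∈ [0,1], σ_κ^{(t)}(θ) = t + ∫₀¹ g(s,t) θ² κ(sθ) σ_κ^{(s)}(θ) ds, where g(s,t) = min(s,t)(1 - max(s,t)) is the Green function of the interval [0,1]. -/
open Set

open Set MeasureTheory intervalIntegral

lemma green_aux (h f f' : ℝ → ℝ)
    (hh : ContinuousOn h (Icc 0 1))
    (hf : ∀ t ∈ Icc (0:ℝ) 1, HasDerivAt f (f' t) t)
    (hf' : ∀ t ∈ Icc (0:ℝ) 1, HasDerivAt f' (-(h t)) t)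
    (hf0 : f 0 = 0) :
    ∀ t ∈ Icc (0:ℝ) 1, f t = t * f 1
      + ((1-t) * (∫ r in (0:ℝ)..t, r * h r)
        + t * ((∫ r in (0:ℝ)..1, (1-r) * h r) - ∫ r in (0:ℝ)..t, (1-r) * h r)) := by
  set h1 : ℝ → ℝ := fun r => r * h r with hh1def
  set h2 : ℝ → ℝ := fun r => (1-r) * h r with hh2def
  have hh1 : ContinuousOn h1 (Icc 0 1) := continuousOn_id.mul hh
  have hh2 : ContinuousOn h2 (Icc 0 1) := (continuousOn_const.sub continuousOn_id).mul hh
  have hsub : ∀ {a b : ℝ}, a ∈ Icc (0:ℝ) 1 → b ∈ Icc (0:ℝ) 1 → uIcc a b ⊆ Icc 0 1 :=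
    fun ha hb => uIcc_subset_Icc ha hb
  have hint1 : ∀ t ∈ Icc (0:ℝ) 1, IntervalIntegrable h1 volume 0 t :=
    fun t ht => (hh1.mono (hsub (left_mem_Icc.2 zero_le_one) ht)).intervalIntegrable
  have hint2 : ∀ t ∈ Icc (0:ℝ) 1, IntervalIntegrable h2 volume 0 t :=
    fun t ht => (hh2.mono (hsub (left_mem_Icc.2 zero_le_one) ht)).intervalIntegrable
  set A : ℝ → ℝ := fun t => ∫ r in (0:ℝ)..t, h1 r with hAdef
  set A2 : ℝ → ℝ := fun t => ∫ r in (0:ℝ)..t, h2 r with hA2def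
  set C : ℝ := A2 1 with hCdef
  -- right derivatives of primitives
  have hA : ∀ t ∈ Ico (0:ℝ) 1, HasDerivWithinAt A (h1 t) (Ici t) t := by
    intro t ht
    have hmem : Icc (0:ℝ) 1 ∈ nhdsWithin t (Ioi t) := Icc_mem_nhdsGT_of_mem ht
    exact integral_hasDerivWithinAt_right (hint1 t ⟨ht.1, ht.2.le⟩)
      ⟨Icc 0 1, hmem, hh1.aestronglyMeasurable measurableSet_Icc⟩
      ((hh1 t ⟨ht.1, ht.2.le⟩).mono_of_mem_nhdsWithin hmem)
  have hA2 : ∀ t ∈ Ico (0:ℝ) 1, HasDerivWithinAt A2 (h2 t) (Ici t) t := by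
    intro t ht
    have hmem : Icc (0:ℝ) 1 ∈ nhdsWithin t (Ioi t) := Icc_mem_nhdsGT_of_mem ht
    exact integral_hasDerivWithinAt_right (hint2 t ⟨ht.1, ht.2.le⟩)
      ⟨Icc 0 1, hmem, hh2.aestronglyMeasurable measurableSet_Icc⟩
      ((hh2 t ⟨ht.1, ht.2.le⟩).mono_of_mem_nhdsWithin hmem)
  -- continuity of primitives
  have hAc : ContinuousOn A (Icc 0 1) := by
    have := continuousOn_primitive_interval
      (μ := volume) (f := h1) (a := (0:ℝ)) (b := 1)
      (by rw [uIcc_of_le zero_le_one]; exact (hh1.mono Subset.rfl).integrableOn_compact isCompact_Icc)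
    rwa [uIcc_of_le zero_le_one] at this
  have hA2c : ContinuousOn A2 (Icc 0 1) := by
    have := continuousOn_primitive_interval
      (μ := volume) (f := h2) (a := (0:ℝ)) (b := 1)
      (by rw [uIcc_of_le zero_le_one]; exact (hh2.mono Subset.rfl).integrableOn_compact isCompact_Icc)
    rwa [uIcc_of_le zero_le_one] at this
  set P' : ℝ → ℝ := fun t => f' t - f 1 + A t - C + A2 t with hP'def
  have hf'c : ContinuousOn f' (Icc 0 1) :=
    fun t ht => (hf' t ht).continuousAt.continuousWithinAt
  have hfc : ContinuousOn f (Icc 0 1) :=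
    fun t ht => (hf t ht).continuousAt.continuousWithinAt
  have hcontP' : ContinuousOn P' (Icc 0 1) :=
    (((hf'c.sub continuousOn_const).add hAc).sub continuousOn_const).add hA2c
  have hP'd : ∀ t ∈ Ico (0:ℝ) 1, HasDerivWithinAt P' 0 (Ici t) t := by
    intro t ht
    have htI : t ∈ Icc (0:ℝ) 1 := ⟨ht.1, ht.2.le⟩
    have hd := ((((hf' t htI).hasDerivWithinAt.sub_const (f 1)).add (hA t ht)).sub_const C).add
      (hA2 t ht)
    refine hd.congr_deriv ?_
    simp only [hh1def, hh2def]; ring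
  have hconst := constant_of_has_deriv_right_zero hcontP' hP'd
  set c : ℝ := P' 0 with hcdef
  set P : ℝ → ℝ := fun t => f t - t * f 1 - ((1-t) * A t + t * (C - A2 t)) with hPdef
  have hPd : ∀ t ∈ Ico (0:ℝ) 1, HasDerivWithinAt P (P' t) (Ici t) t := by
    intro t ht
    have htI : t ∈ Icc (0:ℝ) 1 := ⟨ht.1, ht.2.le⟩
    have d1 : HasDerivWithinAt f (f' t) (Ici t) t := (hf t htI).hasDerivWithinAt
    have d2 : HasDerivWithinAt (fun x : ℝ => x * f 1) (f 1) (Ici t) t :=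
      (hasDerivAt_mul_const (f 1)).hasDerivWithinAt
    have p1 := (((hasDerivAt_id t).const_sub 1).hasDerivWithinAt.mul (hA t ht))
    have p2 := ((hasDerivAt_id t).hasDerivWithinAt.mul ((hA2 t ht).const_sub C))
    have hd := (d1.sub d2).sub (p1.add p2)
    refine hd.congr_deriv ?_
    simp only [hP'def, hh1def, hh2def, id_eq]; ring
  have hQd : ∀ t ∈ Ico (0:ℝ) 1, HasDerivWithinAt (fun t => P t - c * t) 0 (Ici t) t := by
    intro t ht
    have htI : t ∈ Icc (0:ℝ) 1 := ⟨ht.1, ht.2.le⟩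
    have hd := (hPd t ht).sub (((hasDerivAt_id t).const_mul c).hasDerivWithinAt)
    have : P' t = c := hconst t htI
    rw [this] at hd
    simp at hd; exact hd
  have hcontP : ContinuousOn P (Icc 0 1) :=
    (hfc.sub (continuousOn_id.mul continuousOn_const)).sub
      (((continuousOn_const.sub continuousOn_id).mul hAc).add
        (continuousOn_id.mul (continuousOn_const.sub hA2c)))
  have hQconst := constant_of_has_deriv_right_zero
    (hcontP.sub (continuousOn_const.mul continuousOn_id)) hQd
  have hA0 : A 0 = 0 := integral_same
  have hP0 : P 0 = 0 := by simp [hPdef, hf0, hA0]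
  have hPt : ∀ t ∈ Icc (0:ℝ) 1, P t = c * t := by
    intro t ht
    have := hQconst t ht
    simp only [Pi.sub_apply, Pi.mul_apply, id_eq, hP0, mul_zero, sub_zero] at this
    linarith
  have hP1 : P 1 = 0 := by simp [hPdef, hCdef]
  have hc0 : c = 0 := by
    have := hPt 1 (right_mem_Icc.2 zero_le_one)
    rw [hP1] at this; linarith
  intro t ht
  have := hPt t ht
  rw [hc0] at this
  simp only [hPdef, zero_mul] at this
  have hadj : A2 t + (∫ r in t..1, h2 r) = C := by
    exact integral_add_adjacent_intervals (hint2 t ht)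
      (((hh2.mono (hsub ht (right_mem_Icc.2 zero_le_one)))).intervalIntegrable)
  simp only [hAdef, hA2def, hh1def, hh2def] at this ⊢
  linarith

/-- Green-function representation of the distortion coefficients:
`σ_κ^{(t)}(θ) = t + ∫₀¹ g(s,t) θ² κ(sθ) σ_κ^{(s)}(θ) ds` with
`g(s,t) = min(s,t)(1 - max(s,t))`. -/
theorem distortion_green_representation (θ : ℝ) (hθ : 0 < θ)
    (κ s s' : ℝ → ℝ) (hκ : ContinuousOn κ (Icc 0 θ))
    (hs : IsSinSolution κ s s' θ)
    (hpos : ∀ r ∈ Ioc (0:ℝ) θ, 0 < s r) :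
    ∀ t ∈ Icc (0:ℝ) 1,
      s (t * θ) / s θ =
        t + ∫ r in (0:ℝ)..1, (min r t * (1 - max r t)) * θ ^ 2 * κ (r * θ) * (s (r * θ) / s θ) := by
  obtain ⟨hs0, hs'0, hder⟩ := hs
  intro t ht
  have hsθ : 0 < s θ := hpos θ ⟨hθ, le_refl θ⟩
  set h : ℝ → ℝ := fun r => θ^2 * κ (r*θ) * s (r*θ) with hhdef
  have hmap : ∀ r ∈ Icc (0:ℝ) 1, r * θ ∈ Icc 0 θ := fun r hr =>
    ⟨mul_nonneg hr.1 hθ.le, by nlinarith [hr.2]⟩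
  have hscont : ContinuousOn s (Icc 0 θ) :=
    fun x hx => ((hder x hx).1.continuousAt).continuousWithinAt
  have hmul : ContinuousOn (fun r : ℝ => r * θ) (Icc 0 1) :=
    (continuous_mul_right θ).continuousOn
  have hh : ContinuousOn h (Icc 0 1) := by
    exact (continuousOn_const.mul (hκ.comp hmul hmap)).mul (hscont.comp hmul hmap)
  have hf : ∀ t ∈ Icc (0:ℝ) 1, HasDerivAt (fun t => s (t*θ)) (θ * s' (t*θ)) t := by
    intro t ht
    have := ((hder _ (hmap t ht)).1).comp t ((hasDerivAt_id t).mul_const θ)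
    simpa [mul_comm, Function.comp_def] using this
  have hf' : ∀ t ∈ Icc (0:ℝ) 1, HasDerivAt (fun t => θ * s' (t*θ)) (-(h t)) t := by
    intro t ht
    have := (((hder _ (hmap t ht)).2).comp t ((hasDerivAt_id t).mul_const θ)).const_mul θ
    refine this.congr_deriv ?_
    simp only [hhdef, one_mul, id_eq]; ring
  have key := green_aux h (fun t => s (t*θ)) (fun t => θ * s' (t*θ)) hh hf hf'
    (by simpa using hs0) t ht
  simp only [one_mul] at key
  -- rewrite integrand
  have hintg : ∀ r : ℝ,
      (min r t * (1 - max r t)) * θ^2 * κ (r*θ) * (s (r*θ) / s θ)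
        = ((min r t * (1 - max r t)) * h r) / s θ := fun r => by
    simp only [hhdef]; ring
  have hrw : (∫ r in (0:ℝ)..1, (min r t * (1 - max r t)) * θ^2 * κ (r*θ) * (s (r*θ) / s θ))
      = (∫ r in (0:ℝ)..1, (min r t * (1 - max r t)) * h r) / s θ := by
    rw [← intervalIntegral.integral_div]
    exact intervalIntegral.integral_congr fun r _ => hintg r
  rw [hrw]
  -- split and compute the Green integral
  have hgc : ContinuousOn (fun r => (min r t * (1 - max r t)) * h r) (Icc 0 1) :=
    (((continuous_id.min continuous_const).mul
      (continuous_const.sub (continuous_id.max continuous_const))).continuousOn).mul hh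
  have h0I : (0:ℝ) ∈ Icc (0:ℝ) 1 := left_mem_Icc.2 zero_le_one
  have h1I : (1:ℝ) ∈ Icc (0:ℝ) 1 := right_mem_Icc.2 zero_le_one
  have hi1 : IntervalIntegrable (fun r => (min r t * (1 - max r t)) * h r) volume 0 t :=
    (hgc.mono (uIcc_subset_Icc h0I ht)).intervalIntegrable
  have hi2 : IntervalIntegrable (fun r => (min r t * (1 - max r t)) * h r) volume t 1 :=
    (hgc.mono (uIcc_subset_Icc ht h1I)).intervalIntegrable
  have hsplit := intervalIntegral.integral_add_adjacent_intervals hi1 hi2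
  have e1 : (∫ r in (0:ℝ)..t, (min r t * (1 - max r t)) * h r)
      = (1-t) * ∫ r in (0:ℝ)..t, r * h r := by
    rw [← intervalIntegral.integral_const_mul]
    apply intervalIntegral.integral_congr
    intro r hr
    rw [uIcc_of_le ht.1] at hr
    simp only [min_eq_left hr.2, max_eq_right hr.2]; ring
  have e2 : (∫ r in t..(1:ℝ), (min r t * (1 - max r t)) * h r)
      = t * ∫ r in t..(1:ℝ), (1-r) * h r := by
    rw [← intervalIntegral.integral_const_mul]
    apply intervalIntegral.integral_congr
    intro r hr
    rw [uIcc_of_le ht.2] at hr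
    simp only [min_eq_right hr.1, max_eq_left hr.1]; ring
  have hadj : (∫ r in (0:ℝ)..t, (1-r) * h r) + (∫ r in t..(1:ℝ), (1-r) * h r)
      = ∫ r in (0:ℝ)..1, (1-r) * h r := by
    apply intervalIntegral.integral_add_adjacent_intervals
    · exact (((continuousOn_const.sub continuousOn_id).mul hh).mono
        (uIcc_subset_Icc h0I ht)).intervalIntegrable
    · exact (((continuousOn_const.sub continuousOn_id).mul hh).mono
        (uIcc_subset_Icc ht h1I)).intervalIntegrable
  rw [← hsplit, e1, e2, key, ← hadj]
  field_simp
  ring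
end

section
/- Let κ, κ' : [0,θ] → ℝ be continuous with κ(x) ≥ κ'(x) for all x ∈ [0,θ], and suppose 𝔰_{κ'} > 0 and 𝔰_κ > 0 on (0,θ]. Then σ_κ^{(t)}(θ) ≥ σ_{κ'}^{(t)}(θ) for all t ∈ [0,1]. -/
open Set

/-- Monotonicity of generalized distortion coefficients: if `κ ≥ κ'` on `[0,θ]` then
`σ_κ^{(t)}(θ) ≥ σ_{κ'}^{(t)}(θ)` for all `t ∈ [0,1]`. -/
theorem distortion_monotone (θ : ℝ) (hθ : 0 < θ)
    (κ κ' s s' u u' : ℝ → ℝ)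
    (hκ : ContinuousOn κ (Icc 0 θ)) (hκ' : ContinuousOn κ' (Icc 0 θ))
    (hge : ∀ x ∈ Icc (0:ℝ) θ, κ' x ≤ κ x)
    (hs : IsSinSolution κ s s' θ) (hu : IsSinSolution κ' u u' θ)
    (hspos : ∀ r ∈ Ioc (0:ℝ) θ, 0 < s r)
    (hupos : ∀ r ∈ Ioc (0:ℝ) θ, 0 < u r) :
    ∀ t ∈ Icc (0:ℝ) 1, u (t * θ) / u θ ≤ s (t * θ) / s θ := by
  obtain ⟨hs0, hs'0, hsd⟩ := hs
  obtain ⟨hu0, hu'0, hud⟩ := hu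
  have hsnn : ∀ x ∈ Icc (0:ℝ) θ, 0 ≤ s x := by
    intro x hx
    rcases eq_or_lt_of_le hx.1 with h | h
    · simp [← h, hs0]
    · exact (hspos x ⟨h, hx.2⟩).le
  have hunn : ∀ x ∈ Icc (0:ℝ) θ, 0 ≤ u x := by
    intro x hx
    rcases eq_or_lt_of_le hx.1 with h | h
    · simp [← h, hu0]
    · exact (hupos x ⟨h, hx.2⟩).le
  set W : ℝ → ℝ := fun x => s' x * u x - s x * u' x with hWdef
  have hWd : ∀ x ∈ Icc (0:ℝ) θ, HasDerivAt W ((κ' x - κ x) * (s x * u x)) x := by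
    intro x hx
    have h1 := (hsd x hx).1
    have h2 := (hsd x hx).2
    have h3 := (hud x hx).1
    have h4 := (hud x hx).2
    have := (h2.mul h3).sub (h1.mul h4)
    refine this.congr_deriv ?_
    ring
  have hWcont : ContinuousOn W (Icc 0 θ) := fun x hx =>
    ((hWd x hx).continuousAt).continuousWithinAt
  have hWanti : AntitoneOn W (Icc 0 θ) := by
    apply antitoneOn_of_deriv_nonpos (convex_Icc 0 θ) hWcont
    · intro x hx
      have hx' : x ∈ Icc (0:ℝ) θ := interior_subset hx
      exact ((hWd x hx').differentiableAt).differentiableWithinAt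
    · intro x hx
      have hx' : x ∈ Icc (0:ℝ) θ := interior_subset hx
      rw [(hWd x hx').deriv]
      have h1 := hge x hx'
      have h2 := mul_nonneg (hsnn x hx') (hunn x hx')
      nlinarith
  have hWle : ∀ x ∈ Icc (0:ℝ) θ, W x ≤ 0 := by
    intro x hx
    have := hWanti (left_mem_Icc.2 hθ.le) hx hx.1
    simpa [hWdef, hs0, hu0] using this
  set f : ℝ → ℝ := fun x => s x / u x with hfdef
  have hfd : ∀ x ∈ Ioc (0:ℝ) θ,
      HasDerivAt f (W x / (u x) ^ 2) x := by
    intro x hx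
    have hx' : x ∈ Icc (0:ℝ) θ := Ioc_subset_Icc_self hx
    exact ((hsd x hx').1).div ((hud x hx').1) (ne_of_gt (hupos x hx))
  have hfanti : AntitoneOn f (Ioc 0 θ) := by
    apply antitoneOn_of_deriv_nonpos (convex_Ioc 0 θ)
    · exact fun x hx => ((hfd x hx).continuousAt).continuousWithinAt
    · intro x hx
      rw [interior_Ioc] at hx
      have hx' : x ∈ Ioc (0:ℝ) θ := Ioo_subset_Ioc_self hx
      exact ((hfd x hx').differentiableAt).differentiableWithinAt
    · intro x hx
      rw [interior_Ioc] at hx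
      have hx' : x ∈ Ioc (0:ℝ) θ := Ioo_subset_Ioc_self hx
      rw [(hfd x hx').deriv]
      apply div_nonpos_of_nonpos_of_nonneg
      · exact hWle x (Ioc_subset_Icc_self hx')
      · positivity
  intro t ht
  rcases eq_or_lt_of_le ht.1 with h | h
  · simp [← h, hs0, hu0]
  · have htθ : t * θ ∈ Ioc (0:ℝ) θ := by
      constructor
      · exact mul_pos h hθ
      · nlinarith [ht.2]
    have hθmem : θ ∈ Ioc (0:ℝ) θ := right_mem_Ioc.2 hθ
    have key : f θ ≤ f (t * θ) := hfanti htθ hθmem htθ.2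
    have hsθ := hspos θ hθmem
    have huθ := hupos θ hθmem
    have hsa := hspos _ htθ
    have hua := hupos _ htθ
    simp only [hfdef] at key
    rw [div_le_div_iff₀ huθ hua] at key
    rw [div_le_div_iff₀ huθ hsθ]
    nlinarith
end

section
/- Let κ, κ' : [0,θ] → ℝ be continuous with finite distortion coefficients, and let λ ∈ [0,1]. Then for all t ∈ [0,1]: (σ_κ^{(t)}(θ))^{1-λ} · (σ_{κ'}^{(t)}(θ))^{λ} ≥ σ_{(1-λ)κ + λκ'}^{(t)}(θ). In other words, κ ↦ log σ_κ^{(t)}(θ) is convex in κ. -/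
open Set

/-- Log-convexity of the distortion coefficients in `κ`:
`(σ_κ^{(t)}(θ))^{1-λ}·(σ_{κ'}^{(t)}(θ))^{λ} ≥ σ_{(1-λ)κ+λκ'}^{(t)}(θ)`. -/
theorem distortion_log_convex (θ : ℝ) (hθ : 0 < θ) (l : ℝ) (hl : l ∈ Icc (0:ℝ) 1)
    (κ κ' s₀ s₀' s₁ s₁' s₂ s₂' : ℝ → ℝ)
    (hκ : ContinuousOn κ (Icc 0 θ)) (hκ' : ContinuousOn κ' (Icc 0 θ))
    (hs₀ : IsSinSolution κ s₀ s₀' θ)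
    (hs₁ : IsSinSolution κ' s₁ s₁' θ)
    (hs₂ : IsSinSolution (fun x => (1 - l) * κ x + l * κ' x) s₂ s₂' θ)
    (hpos₀ : ∀ r ∈ Ioc (0:ℝ) θ, 0 < s₀ r)
    (hpos₁ : ∀ r ∈ Ioc (0:ℝ) θ, 0 < s₁ r)
    (hpos₂ : ∀ r ∈ Ioc (0:ℝ) θ, 0 < s₂ r) :
    ∀ t ∈ Icc (0:ℝ) 1,
      s₂ (t * θ) / s₂ θ ≤ (s₀ (t * θ) / s₀ θ) ^ (1 - l) * (s₁ (t * θ) / s₁ θ) ^ l := by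
  obtain ⟨hs₀0, hs₀'0, hs₀d⟩ := hs₀
  obtain ⟨hs₁0, hs₁'0, hs₁d⟩ := hs₁
  obtain ⟨hs₂0, hs₂'0, hs₂dd⟩ := hs₂
  have hs₂d : ∀ x ∈ Set.Icc (0:ℝ) θ, HasDerivAt s₂ (s₂' x) x ∧
      HasDerivAt s₂' (-(((1 - l) * κ x + l * κ' x) * s₂ x)) x := hs₂dd
  have hl0 := hl.1
  have hl1 := hl.2
  have h0mem : (0:ℝ) ∈ Icc (0:ℝ) θ := ⟨le_refl 0, hθ.le⟩
  -- derivative of W on (0, θ]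
  have key : ∀ x ∈ Ioc (0:ℝ) θ,
      HasDerivAt (fun y => s₀ y ^ (1 - l) * s₁ y ^ l * s₂ y *
          ((1 - l) * (s₀' y / s₀ y) + l * (s₁' y / s₁ y) - s₂' y / s₂ y))
        (-((1 - l) * l * (s₀ x ^ (1 - l) * s₁ x ^ l * s₂ x) *
          (s₀' x / s₀ x - s₁' x / s₁ x) ^ 2)) x := by
    intro x hx
    have hx0 : 0 < x := hx.1
    have hxI : x ∈ Icc (0:ℝ) θ := Ioc_subset_Icc_self hx
    obtain ⟨h0, h0'⟩ := hs₀d x hxI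
    obtain ⟨h1, h1'⟩ := hs₁d x hxI
    obtain ⟨h2, h2'⟩ := hs₂d x hxI
    have p0 := hpos₀ x hx
    have p1 := hpos₁ x hx
    have p2 := hpos₂ x hx
    have n0 : s₀ x ≠ 0 := ne_of_gt p0
    have n1 : s₁ x ≠ 0 := ne_of_gt p1
    have n2 : s₂ x ≠ 0 := ne_of_gt p2
    have e0 : s₀ x ^ (1 - l - 1) = s₀ x ^ (1 - l) / s₀ x := by
      rw [Real.rpow_sub p0, Real.rpow_one]
    have e1 : s₁ x ^ (l - 1) = s₁ x ^ l / s₁ x := by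
      rw [Real.rpow_sub p1, Real.rpow_one]
    have hu0 : HasDerivAt (fun y => s₀' y / s₀ y) (-(κ x) - (s₀' x / s₀ x) ^ 2) x := by
      refine (h0'.div h0 n0).congr_deriv ?_
      field_simp
    have hu1 : HasDerivAt (fun y => s₁' y / s₁ y) (-(κ' x) - (s₁' x / s₁ x) ^ 2) x := by
      refine (h1'.div h1 n1).congr_deriv ?_
      field_simp
    have hu2 : HasDerivAt (fun y => s₂' y / s₂ y)
        (-((1 - l) * κ x + l * κ' x) - (s₂' x / s₂ x) ^ 2) x := by
      refine (h2'.div h2 n2).congr_deriv ?_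
      field_simp
    have hψ : HasDerivAt (fun y => (1 - l) * (s₀' y / s₀ y) + l * (s₁' y / s₁ y) - s₂' y / s₂ y)
        ((s₂' x / s₂ x) ^ 2 - (1 - l) * (s₀' x / s₀ x) ^ 2 - l * (s₁' x / s₁ x) ^ 2) x := by
      refine (((hu0.const_mul (1 - l)).add (hu1.const_mul l)).sub hu2).congr_deriv ?_
      ring
    have hF : HasDerivAt (fun y => s₀ y ^ (1 - l) * s₁ y ^ l)
        (s₀ x ^ (1 - l) * s₁ x ^ l * ((1 - l) * (s₀' x / s₀ x) + l * (s₁' x / s₁ x))) x := by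
      refine ((h0.rpow_const (Or.inl n0)).mul (h1.rpow_const (Or.inl n1))).congr_deriv ?_
      rw [e0, e1]
      field_simp
    refine ((hF.mul h2).mul hψ).congr_deriv ?_
    simp only [Pi.mul_apply]
    field_simp
    ring
  -- limit of W at 0⁺
  have hWlim : Filter.Tendsto (fun y => s₀ y ^ (1 - l) * s₁ y ^ l * s₂ y *
        ((1 - l) * (s₀' y / s₀ y) + l * (s₁' y / s₁ y) - s₂' y / s₂ y))
      (nhdsWithin 0 (Ioi 0)) (nhds 0) := by
    have hslope : ∀ (s s' : ℝ → ℝ), s 0 = 0 → s' 0 = 1 → HasDerivAt s (s' 0) 0 →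
        Filter.Tendsto (fun x => s x / x) (nhdsWithin (0:ℝ) (Ioi 0)) (nhds 1) := by
      intro s s' h0 h1 hd
      have h := hasDerivAt_iff_tendsto_slope.mp hd
      rw [h1] at h
      have h2 : Filter.Tendsto (slope s 0) (nhdsWithin (0:ℝ) (Ioi 0)) (nhds 1) :=
        h.mono_left (nhdsWithin_mono _ fun x hx => by simpa using ne_of_gt hx)
      exact h2.congr fun x => by simp [slope_def_field, h0]
    have t0 := hslope s₀ s₀' hs₀0 hs₀'0 (hs₀d 0 h0mem).1
    have t1 := hslope s₁ s₁' hs₁0 hs₁'0 (hs₁d 0 h0mem).1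
    have t2 := hslope s₂ s₂' hs₂0 hs₂'0 (hs₂d 0 h0mem).1
    have i0 : Filter.Tendsto (fun x => x / s₀ x) (nhdsWithin (0:ℝ) (Ioi 0)) (nhds 1) := by
      have := t0.inv₀ one_ne_zero
      simpa [inv_div] using this
    have i1 : Filter.Tendsto (fun x => x / s₁ x) (nhdsWithin (0:ℝ) (Ioi 0)) (nhds 1) := by
      have := t1.inv₀ one_ne_zero
      simpa [inv_div] using this
    have i2 : Filter.Tendsto (fun x => x / s₂ x) (nhdsWithin (0:ℝ) (Ioi 0)) (nhds 1) := by
      have := t2.inv₀ one_ne_zero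
      simpa [inv_div] using this
    have r0 : Filter.Tendsto (fun x => (s₀ x / x) ^ (1 - l))
        (nhdsWithin (0:ℝ) (Ioi 0)) (nhds 1) := by
      have := t0.rpow_const (p := 1 - l) (Or.inl one_ne_zero)
      simpa using this
    have r1 : Filter.Tendsto (fun x => (s₁ x / x) ^ l)
        (nhdsWithin (0:ℝ) (Ioi 0)) (nhds 1) := by
      have := t1.rpow_const (p := l) (Or.inl one_ne_zero)
      simpa using this
    have c0' : Filter.Tendsto s₀' (nhdsWithin (0:ℝ) (Ioi 0)) (nhds 1) := by
      have := (hs₀d 0 h0mem).2.continuousAt.tendsto.mono_left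
        (nhdsWithin_le_nhds (s := Ioi (0:ℝ)))
      rwa [hs₀'0] at this
    have c1' : Filter.Tendsto s₁' (nhdsWithin (0:ℝ) (Ioi 0)) (nhds 1) := by
      have := (hs₁d 0 h0mem).2.continuousAt.tendsto.mono_left
        (nhdsWithin_le_nhds (s := Ioi (0:ℝ)))
      rwa [hs₁'0] at this
    have c2' : Filter.Tendsto s₂' (nhdsWithin (0:ℝ) (Ioi 0)) (nhds 1) := by
      have := (hs₂d 0 h0mem).2.continuousAt.tendsto.mono_left
        (nhdsWithin_le_nhds (s := Ioi (0:ℝ)))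
      rwa [hs₂'0] at this
    have c2 : Filter.Tendsto s₂ (nhdsWithin (0:ℝ) (Ioi 0)) (nhds 0) := by
      have := (hs₂d 0 h0mem).1.continuousAt.tendsto.mono_left
        (nhdsWithin_le_nhds (s := Ioi (0:ℝ)))
      rwa [hs₂0] at this
    have hG : Filter.Tendsto (fun x => (s₀ x / x) ^ (1 - l) * (s₁ x / x) ^ l *
        (s₂ x * ((1 - l) * (s₀' x * (x / s₀ x)) + l * (s₁' x * (x / s₁ x)) - s₂' x * (x / s₂ x))))
        (nhdsWithin (0:ℝ) (Ioi 0))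
        (nhds (1 * 1 * (0 * ((1 - l) * (1 * 1) + l * (1 * 1) - 1 * 1)))) :=
      (r0.mul r1).mul (c2.mul ((((c0'.mul i0).const_mul (1 - l)).add
        ((c1'.mul i1).const_mul l)).sub (c2'.mul i2)))
    norm_num at hG
    refine Filter.Tendsto.congr' ?_ hG
    filter_upwards [Ioc_mem_nhdsGT_of_mem (show (0:ℝ) ∈ Ico 0 θ from ⟨le_refl 0, hθ⟩)]
      with x hx
    have hx0 : 0 < x := hx.1
    have p0 := hpos₀ x hx
    have p1 := hpos₁ x hx
    have p2 := hpos₂ x hx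
    have e0 : (s₀ x / x) ^ (1 - l) = s₀ x ^ (1 - l) / x ^ (1 - l) :=
      Real.div_rpow p0.le hx0.le _
    have e1 : (s₁ x / x) ^ l = s₁ x ^ l / x ^ l := Real.div_rpow p1.le hx0.le _
    have exx : x ^ (1 - l) * x ^ l = x := by
      rw [← Real.rpow_add hx0]
      norm_num
    rw [e0, e1, div_mul_div_comm, exx]
    field_simp
  -- W is antitone on (0, θ], hence W ≤ 0 there
  have hWanti : AntitoneOn (fun y => s₀ y ^ (1 - l) * s₁ y ^ l * s₂ y *
      ((1 - l) * (s₀' y / s₀ y) + l * (s₁' y / s₁ y) - s₂' y / s₂ y)) (Ioc 0 θ) := by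
    refine antitoneOn_of_deriv_nonpos (convex_Ioc 0 θ) ?_ ?_ ?_
    · exact fun x hx => ((key x hx).continuousAt).continuousWithinAt
    · rw [interior_Ioc]
      exact fun x hx => ((key x (Ioo_subset_Ioc_self hx)).differentiableAt).differentiableWithinAt
    · rw [interior_Ioc]
      intro x hx
      rw [(key x (Ioo_subset_Ioc_self hx)).deriv]
      have p0 := hpos₀ x (Ioo_subset_Ioc_self hx)
      have p1 := hpos₁ x (Ioo_subset_Ioc_self hx)
      have p2 := hpos₂ x (Ioo_subset_Ioc_self hx)
      have hP : 0 < s₀ x ^ (1 - l) * s₁ x ^ l * s₂ x :=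
        mul_pos (mul_pos (Real.rpow_pos_of_pos p0 _) (Real.rpow_pos_of_pos p1 _)) p2
      have h1 : 0 ≤ (1 - l) * l * (s₀ x ^ (1 - l) * s₁ x ^ l * s₂ x) *
          (s₀' x / s₀ x - s₁' x / s₁ x) ^ 2 := by
        apply mul_nonneg
        apply mul_nonneg
        apply mul_nonneg (by linarith) hl0
        exact hP.le
        exact sq_nonneg _
      linarith
  have hWle : ∀ x ∈ Ioc (0:ℝ) θ, s₀ x ^ (1 - l) * s₁ x ^ l * s₂ x *
      ((1 - l) * (s₀' x / s₀ x) + l * (s₁' x / s₁ x) - s₂' x / s₂ x) ≤ 0 := by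
    intro x hx
    have hev : ∀ᶠ ε in nhdsWithin (0:ℝ) (Ioi 0),
        s₀ x ^ (1 - l) * s₁ x ^ l * s₂ x *
          ((1 - l) * (s₀' x / s₀ x) + l * (s₁' x / s₁ x) - s₂' x / s₂ x) ≤
        s₀ ε ^ (1 - l) * s₁ ε ^ l * s₂ ε *
          ((1 - l) * (s₀' ε / s₀ ε) + l * (s₁' ε / s₁ ε) - s₂' ε / s₂ ε) := by
      filter_upwards [Ioc_mem_nhdsGT_of_mem (show (0:ℝ) ∈ Ico 0 x from ⟨le_refl 0, hx.1⟩)]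
        with ε hε
      exact hWanti ⟨hε.1, hε.2.trans hx.2⟩ hx hε.2
    exact ge_of_tendsto hWlim hev
  -- hence ψ ≤ 0, so g is antitone on (0, θ]
  have hψle : ∀ x ∈ Ioc (0:ℝ) θ,
      (1 - l) * (s₀' x / s₀ x) + l * (s₁' x / s₁ x) - s₂' x / s₂ x ≤ 0 := by
    intro x hx
    have h := hWle x hx
    have hP : 0 < s₀ x ^ (1 - l) * s₁ x ^ l * s₂ x :=
      mul_pos (mul_pos (Real.rpow_pos_of_pos (hpos₀ x hx) _)
        (Real.rpow_pos_of_pos (hpos₁ x hx) _)) (hpos₂ x hx)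
    by_contra hc
    push_neg at hc
    nlinarith [mul_pos hP hc]
  have hganti : AntitoneOn (fun x => (1 - l) * Real.log (s₀ x) + l * Real.log (s₁ x)
      - Real.log (s₂ x)) (Ioc 0 θ) := by
    have hg : ∀ x ∈ Ioc (0:ℝ) θ, HasDerivAt (fun x => (1 - l) * Real.log (s₀ x)
        + l * Real.log (s₁ x) - Real.log (s₂ x))
        ((1 - l) * (s₀' x / s₀ x) + l * (s₁' x / s₁ x) - s₂' x / s₂ x) x := by
      intro x hx
      have hxI : x ∈ Icc (0:ℝ) θ := Ioc_subset_Icc_self hx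
      have n0 : s₀ x ≠ 0 := ne_of_gt (hpos₀ x hx)
      have n1 : s₁ x ≠ 0 := ne_of_gt (hpos₁ x hx)
      have n2 : s₂ x ≠ 0 := ne_of_gt (hpos₂ x hx)
      exact ((((hs₀d x hxI).1.log n0).const_mul (1 - l)).add
        (((hs₁d x hxI).1.log n1).const_mul l)).sub ((hs₂d x hxI).1.log n2)
    refine antitoneOn_of_deriv_nonpos (convex_Ioc 0 θ) ?_ ?_ ?_
    · exact fun x hx => ((hg x hx).continuousAt).continuousWithinAt
    · rw [interior_Ioc]
      exact fun x hx => ((hg x (Ioo_subset_Ioc_self hx)).differentiableAt).differentiableWithinAt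
    · rw [interior_Ioc]
      intro x hx
      rw [(hg x (Ioo_subset_Ioc_self hx)).deriv]
      exact hψle x (Ioo_subset_Ioc_self hx)
  -- conclusion
  intro t ht
  rcases eq_or_lt_of_le ht.1 with h | h
  · rw [← h]
    simp only [zero_mul, hs₀0, hs₁0, hs₂0, zero_div]
    exact mul_nonneg (Real.rpow_nonneg le_rfl _) (Real.rpow_nonneg le_rfl _)
  · have hxmem : t * θ ∈ Ioc (0:ℝ) θ := ⟨mul_pos h hθ, by nlinarith [ht.2]⟩
    have hθmem : θ ∈ Ioc (0:ℝ) θ := ⟨hθ, le_rfl⟩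
    have hg := hganti hxmem hθmem hxmem.2
    simp only at hg
    have p0x := hpos₀ _ hxmem
    have p1x := hpos₁ _ hxmem
    have p2x := hpos₂ _ hxmem
    have p0θ := hpos₀ _ hθmem
    have p1θ := hpos₁ _ hθmem
    have p2θ := hpos₂ _ hθmem
    have hrhs : 0 < (s₀ (t * θ) / s₀ θ) ^ (1 - l) * (s₁ (t * θ) / s₁ θ) ^ l :=
      mul_pos (Real.rpow_pos_of_pos (div_pos p0x p0θ) _)
        (Real.rpow_pos_of_pos (div_pos p1x p1θ) _)
    refine (Real.log_le_log_iff (div_pos p2x p2θ) hrhs).mp ?_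
    rw [Real.log_div (ne_of_gt p2x) (ne_of_gt p2θ),
      Real.log_mul (ne_of_gt (Real.rpow_pos_of_pos (div_pos p0x p0θ) _))
        (ne_of_gt (Real.rpow_pos_of_pos (div_pos p1x p1θ) _)),
      Real.log_rpow (div_pos p0x p0θ), Real.log_rpow (div_pos p1x p1θ),
      Real.log_div (ne_of_gt p0x) (ne_of_gt p0θ), Real.log_div (ne_of_gt p1x) (ne_of_gt p1θ)]
    nlinarith [hg]
end

section
/- Fix t ∈ [0,1]. The function G(x, y, κ) = log(σ_{κ⁻}^{(1-t)} e^x + σ_{κ⁺}^{(t)} e^y), defined on ℝ² × C([0,1]) (with κ restricted so that the distortion coefficients are finite), is jointly convex, where κ⁻(s) = κ(1-s) and κ⁺ = κ. -/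
open Set

section Helpers
open Filter Real Topology

lemma slope_lim {κ s s' : ℝ → ℝ} (h : IsSinSolution κ s s' 1) :
    Tendsto (fun y => s y / y) (𝓝[>] (0:ℝ)) (𝓝 1) := by
  have hd : HasDerivAt s 1 0 := by
    have := (h.2.2 0 ⟨le_refl 0, zero_le_one⟩).1
    rwa [h.2.1] at this
  have h1 := hasDerivAt_iff_tendsto_slope.mp hd
  have h2 : Tendsto (slope s 0) (𝓝[>] (0:ℝ)) (𝓝 1) :=
    h1.mono_left (nhdsWithin_mono _ (fun y hy => ne_of_gt hy))
  refine h2.congr (fun y => ?_)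
  simp [slope, h.1, div_eq_inv_mul]

lemma deriv_cont_lim {κ s s' : ℝ → ℝ} (h : IsSinSolution κ s s' 1) :
    Tendsto s' (𝓝[>] (0:ℝ)) (𝓝 1) := by
  have h1 := ((h.2.2 0 ⟨le_refl 0, zero_le_one⟩).2).continuousAt.tendsto
  rw [h.2.1] at h1
  exact h1.mono_left nhdsWithin_le_nhds

lemma sol_lim {κ s s' : ℝ → ℝ} (h : IsSinSolution κ s s' 1) :
    Tendsto s (𝓝[>] (0:ℝ)) (𝓝 0) := by
  have h1 := ((h.2.2 0 ⟨le_refl 0, zero_le_one⟩).1).continuousAt.tendsto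
  rw [h.1] at h1
  exact h1.mono_left nhdsWithin_le_nhds

lemma holder2 {a₀ a₁ b₀ b₁ l : ℝ} (hl0 : 0 ≤ l) (hl1 : l ≤ 1)
    (ha₀ : 0 ≤ a₀) (ha₁ : 0 ≤ a₁) (hb₀ : 0 ≤ b₀) (hb₁ : 0 ≤ b₁) :
    a₀ ^ (1 - l) * a₁ ^ l + b₀ ^ (1 - l) * b₁ ^ l ≤ (a₀ + b₀) ^ (1 - l) * (a₁ + b₁) ^ l := by
  rcases eq_or_lt_of_le hl0 with heq | hl0'
  · rw [← heq]
    simp only [sub_zero, Real.rpow_one, Real.rpow_zero, mul_one]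
    linarith
  rcases eq_or_lt_of_le hl1 with heq | hl1'
  · rw [heq]
    simp only [sub_self, Real.rpow_zero, Real.rpow_one, one_mul]
    linarith
  have hA0 : 0 ≤ a₀ + b₀ := by linarith
  have hB0 : 0 ≤ a₁ + b₁ := by linarith
  rcases eq_or_lt_of_le hA0 with hA | hA
  · have h1 : a₀ = 0 := by linarith
    have h2 : b₀ = 0 := by linarith
    rw [h1, h2]
    simp [Real.zero_rpow (show (1:ℝ) - l ≠ 0 by intro hc; linarith)]
  rcases eq_or_lt_of_le hB0 with hB | hB
  · have h1 : a₁ = 0 := by linarith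
    have h2 : b₁ = 0 := by linarith
    rw [h1, h2]
    simp [Real.zero_rpow (ne_of_gt hl0')]
  set A := a₀ + b₀ with hAdef
  set B := a₁ + b₁ with hBdef
  have key : ∀ a b : ℝ, 0 ≤ a → 0 ≤ b →
      a ^ (1 - l) * b ^ l ≤ A ^ (1 - l) * B ^ l * ((1 - l) * (a / A) + l * (b / B)) := by
    intro a b ha hb
    have h1 : a ^ (1 - l) = A ^ (1 - l) * (a / A) ^ (1 - l) := by
      rw [← Real.mul_rpow (le_of_lt hA) (by positivity), mul_div_cancel₀ _ (ne_of_gt hA)]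
    have h2 : b ^ l = B ^ l * (b / B) ^ l := by
      rw [← Real.mul_rpow (le_of_lt hB) (by positivity), mul_div_cancel₀ _ (ne_of_gt hB)]
    rw [h1, h2]
    have hgm := Real.geom_mean_le_arith_mean2_weighted (by linarith : (0:ℝ) ≤ 1 - l) hl0
      (by positivity : (0:ℝ) ≤ a / A) (by positivity : (0:ℝ) ≤ b / B) (by ring)
    calc A ^ (1 - l) * (a / A) ^ (1 - l) * (B ^ l * (b / B) ^ l)
        = A ^ (1 - l) * B ^ l * ((a / A) ^ (1 - l) * (b / B) ^ l) := by ring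
      _ ≤ A ^ (1 - l) * B ^ l * ((1 - l) * (a / A) + l * (b / B)) := by
          apply mul_le_mul_of_nonneg_left hgm
          exact mul_nonneg (Real.rpow_nonneg (le_of_lt hA) _) (Real.rpow_nonneg (le_of_lt hB) _)
  have k1 := key a₀ a₁ ha₀ ha₁
  have k2 := key b₀ b₁ hb₀ hb₁
  have hsum : A ^ (1 - l) * B ^ l * ((1 - l) * (a₀ / A) + l * (a₁ / B)) +
      A ^ (1 - l) * B ^ l * ((1 - l) * (b₀ / A) + l * (b₁ / B)) = A ^ (1 - l) * B ^ l := by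
    field_simp
    ring
  linarith [k1, k2]

lemma sin_ratio_le (l : ℝ) (hl0 : 0 ≤ l) (hl1 : l ≤ 1) (κ₀ κ₁ : ℝ → ℝ)
    (s₀ s₀' s₁ s₁' sl sl' : ℝ → ℝ)
    (h₀ : IsSinSolution κ₀ s₀ s₀' 1) (h₁ : IsSinSolution κ₁ s₁ s₁' 1)
    (hL : IsSinSolution (fun r => (1 - l) * κ₀ r + l * κ₁ r) sl sl' 1)
    (p₀ : ∀ r ∈ Ioc (0:ℝ) 1, 0 < s₀ r) (p₁ : ∀ r ∈ Ioc (0:ℝ) 1, 0 < s₁ r)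
    (pl : ∀ r ∈ Ioc (0:ℝ) 1, 0 < sl r)
    (t : ℝ) (ht0 : 0 ≤ t) (ht1 : t ≤ 1) :
    sl t / sl 1 ≤ (s₀ t / s₀ 1) ^ (1 - l) * (s₁ t / s₁ 1) ^ l := by
  rcases eq_or_lt_of_le ht0 with heq | ht0'
  · rw [← heq, hL.1, h₀.1, h₁.1, zero_div]
    exact mul_nonneg (Real.rpow_nonneg (by simp [zero_div]) _)
      (Real.rpow_nonneg (by simp [zero_div]) _)
  -- now 0 < t
  set w : ℝ → ℝ := fun x => s₀ x ^ (1 - l) * s₁ x ^ l with hw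
  set g : ℝ → ℝ := fun x => (1 - l) * s₀' x / s₀ x + l * s₁' x / s₁ x with hg
  set dw : ℝ → ℝ := fun x => g x * w x with hdw
  set W : ℝ → ℝ := fun x => sl' x * w x - sl x * dw x with hW
  have wpos : ∀ x ∈ Ioc (0:ℝ) 1, 0 < w x := fun x hx =>
    mul_pos (Real.rpow_pos_of_pos (p₀ x hx) _) (Real.rpow_pos_of_pos (p₁ x hx) _)
  -- derivative of w
  have hdw' : ∀ x ∈ Ioc (0:ℝ) 1, HasDerivAt w (dw x) x := by
    intro x hx
    have hx' : x ∈ Icc (0:ℝ) 1 := ⟨hx.1.le, hx.2⟩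
    have h0 := (p₀ x hx).ne'
    have h1 := (p₁ x hx).ne'
    have d1 : HasDerivAt (fun y => s₀ y ^ (1 - l)) (s₀' x * (1 - l) * s₀ x ^ (1 - l - 1)) x :=
      ((h₀.2.2 x hx').1).rpow_const (Or.inl h0)
    have d2 : HasDerivAt (fun y => s₁ y ^ l) (s₁' x * l * s₁ x ^ (l - 1)) x :=
      ((h₁.2.2 x hx').1).rpow_const (Or.inl h1)
    have := d1.mul d2
    refine this.congr_deriv ?_
    symm
    rw [Real.rpow_sub_one h0, Real.rpow_sub_one h1]
    simp only [hdw, hg, hw]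
    field_simp
  -- derivative of W
  have hWd : ∀ x ∈ Ioc (0:ℝ) 1,
      HasDerivAt W (sl x * w x * (l * (1 - l) *
        ((s₀' x / s₀ x - s₁' x / s₁ x)) ^ 2)) x := by
    intro x hx
    have hx' : x ∈ Icc (0:ℝ) 1 := ⟨hx.1.le, hx.2⟩
    have h0 := (p₀ x hx).ne'
    have h1 := (p₁ x hx).ne'
    have ds₀ := (h₀.2.2 x hx').1
    have ds₀' := (h₀.2.2 x hx').2
    have ds₁ := (h₁.2.2 x hx').1
    have ds₁' := (h₁.2.2 x hx').2
    have dsl := (hL.2.2 x hx').1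
    have dsl' := (hL.2.2 x hx').2
    have hgd : HasDerivAt g
        ((1 - l) * ((-(κ₀ x * s₀ x)) * s₀ x - s₀' x * s₀' x) / s₀ x ^ 2 +
          l * ((-(κ₁ x * s₁ x)) * s₁ x - s₁' x * s₁' x) / s₁ x ^ 2) x := by
      have t0 : HasDerivAt (fun y => (1 - l) * s₀' y / s₀ y)
          (((1 - l) * (-(κ₀ x * s₀ x)) * s₀ x - (1 - l) * s₀' x * s₀' x) / s₀ x ^ 2) x :=
        ((ds₀'.const_mul (1 - l)).div ds₀ h0)
      have t1 : HasDerivAt (fun y => l * s₁' y / s₁ y)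
          ((l * (-(κ₁ x * s₁ x)) * s₁ x - l * s₁' x * s₁' x) / s₁ x ^ 2) x :=
        ((ds₁'.const_mul l).div ds₁ h1)
      have := t0.add t1
      refine this.congr_deriv ?_
      symm
      field_simp
    have hdwd : HasDerivAt dw
        (((1 - l) * ((-(κ₀ x * s₀ x)) * s₀ x - s₀' x * s₀' x) / s₀ x ^ 2 +
          l * ((-(κ₁ x * s₁ x)) * s₁ x - s₁' x * s₁' x) / s₁ x ^ 2) * w x + g x * dw x) x :=
      hgd.mul (hdw' x hx)
    have := (dsl'.mul (hdw' x hx)).sub (dsl.mul hdwd)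
    refine this.congr_deriv ?_
    symm
    simp only [hdw, hg, hw]
    field_simp
    ring
  -- W is monotone on Ioc 0 1
  have hWmono : MonotoneOn W (Ioc (0:ℝ) 1) := by
    apply monotoneOn_of_deriv_nonneg (convex_Ioc 0 1)
    · exact fun x hx => ((hWd x hx).continuousAt).continuousWithinAt
    · rw [interior_Ioc]
      exact fun x hx => ((hWd x (Ioo_subset_Ioc_self hx)).differentiableAt).differentiableWithinAt
    · rw [interior_Ioc]
      intro x hx
      have hx' := Ioo_subset_Ioc_self hx
      rw [(hWd x hx').deriv]
      have := wpos x hx'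
      have := pl x hx'
      have hll : 0 ≤ l * (1 - l) := mul_nonneg hl0 (by linarith)
      positivity
  -- limit of W at 0+
  have hWlim : Tendsto W (𝓝[>] (0:ℝ)) (𝓝 0) := by
    have q₀ := slope_lim h₀
    have q₁ := slope_lim h₁
    have ql := slope_lim hL
    have c₀ := deriv_cont_lim h₀
    have c₁ := deriv_cont_lim h₁
    have cl := deriv_cont_lim hL
    have zl := sol_lim hL
    have hr10 : Tendsto (fun y => sl y / s₀ y) (𝓝[>] (0:ℝ)) (𝓝 1) := by
      have := ql.div q₀ one_ne_zero
      rw [div_one] at this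
      refine this.congr' ?_
      filter_upwards [Ioc_mem_nhdsGT zero_lt_one] with y hy
      have h0 := (p₀ y hy).ne'
      have hyne := hy.1.ne'
      simp only [Pi.div_apply]
      field_simp
    have hr11 : Tendsto (fun y => sl y / s₁ y) (𝓝[>] (0:ℝ)) (𝓝 1) := by
      have := ql.div q₁ one_ne_zero
      rw [div_one] at this
      refine this.congr' ?_
      filter_upwards [Ioc_mem_nhdsGT zero_lt_one] with y hy
      have h1 := (p₁ y hy).ne'
      have hyne := hy.1.ne'
      simp only [Pi.div_apply]
      field_simp
    have hA : Tendsto (fun y => (s₀ y / y) ^ (1 - l) * (s₁ y / y) ^ l)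
        (𝓝[>] (0:ℝ)) (𝓝 1) := by
      have t0 : Tendsto (fun y => (s₀ y / y) ^ (1 - l)) (𝓝[>] (0:ℝ)) (𝓝 1) := by
        have := (Real.continuousAt_rpow_const 1 (1 - l) (Or.inl one_ne_zero)).tendsto.comp q₀
        simpa [Function.comp_def] using this
      have t1 : Tendsto (fun y => (s₁ y / y) ^ l) (𝓝[>] (0:ℝ)) (𝓝 1) := by
        have := (Real.continuousAt_rpow_const 1 l (Or.inl one_ne_zero)).tendsto.comp q₁
        simpa [Function.comp_def] using this
      simpa using t0.mul t1
    have hF : Tendsto (fun y =>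
        (sl' y - ((1 - l) * s₀' y * (sl y / s₀ y) + l * s₁' y * (sl y / s₁ y))) *
          (y * ((s₀ y / y) ^ (1 - l) * (s₁ y / y) ^ l))) (𝓝[>] (0:ℝ)) (𝓝 0) := by
      have tfirst : Tendsto (fun y =>
          sl' y - ((1 - l) * s₀' y * (sl y / s₀ y) + l * s₁' y * (sl y / s₁ y)))
          (𝓝[>] (0:ℝ)) (𝓝 0) := by
        have h := cl.sub (((c₀.const_mul (1 - l)).mul hr10).add
          ((c₁.const_mul l).mul hr11))
        have e : (1:ℝ) - ((1 - l) * 1 * 1 + l * 1 * 1) = 0 := by ring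
        rw [e] at h
        exact h
      have tsecond : Tendsto (fun y => y * ((s₀ y / y) ^ (1 - l) * (s₁ y / y) ^ l))
          (𝓝[>] (0:ℝ)) (𝓝 0) := by
        have hy : Tendsto (fun y : ℝ => y) (𝓝[>] (0:ℝ)) (𝓝 0) :=
          tendsto_id.mono_left nhdsWithin_le_nhds
        simpa using hy.mul hA
      simpa using tfirst.mul tsecond
    refine hF.congr' ?_
    filter_upwards [Ioc_mem_nhdsGT zero_lt_one] with y hy
    have hy0 : (0:ℝ) < y := hy.1
    have h0 := (p₀ y hy).ne'
    have h1 := (p₁ y hy).ne'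
    have e0 : (s₀ y / y) ^ (1 - l) = s₀ y ^ (1 - l) / y ^ (1 - l) :=
      Real.div_rpow (p₀ y hy).le hy0.le _
    have e1 : (s₁ y / y) ^ l = s₁ y ^ l / y ^ l := Real.div_rpow (p₁ y hy).le hy0.le _
    have ey : y ^ (1 - l) * y ^ l = y := by
      rw [← Real.rpow_add hy0]
      norm_num
    have hyl : y ^ (1 - l) ≠ 0 := (Real.rpow_pos_of_pos hy0 _).ne'
    have hyl' : y ^ l ≠ 0 := (Real.rpow_pos_of_pos hy0 _).ne'
    simp only [hW, hdw, hg, hw]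
    rw [e0, e1]
    field_simp
    linear_combination (-(sl' y * s₀ y * s₁ y - sl y * ((1 - l) * s₀' y * s₁ y + l * s₀ y * s₁' y)) * s₀ y ^ (1 - l) * s₁ y ^ l) * ey
  -- W ≥ 0 on Ioc 0 1
  have hWnonneg : ∀ x ∈ Ioc (0:ℝ) 1, 0 ≤ W x := by
    intro x hx
    refine le_of_tendsto hWlim ?_
    filter_upwards [Ioc_mem_nhdsGT hx.1] with y hy
    exact hWmono ⟨hy.1, le_trans hy.2 hx.2⟩ hx hy.2
  -- ratio sl/w monotone on Icc t 1
  have hsub : Icc t 1 ⊆ Ioc (0:ℝ) 1 := fun x hx => ⟨lt_of_lt_of_le ht0' hx.1, hx.2⟩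
  have hRd : ∀ x ∈ Ioc (0:ℝ) 1,
      HasDerivAt (fun y => sl y / w y) (W x / w x ^ 2) x := by
    intro x hx
    have hx' : x ∈ Icc (0:ℝ) 1 := ⟨hx.1.le, hx.2⟩
    have := ((hL.2.2 x hx').1).div (hdw' x hx) (wpos x hx).ne'
    exact this
  have hRmono : MonotoneOn (fun y => sl y / w y) (Icc t 1) := by
    apply monotoneOn_of_deriv_nonneg (convex_Icc t 1)
    · exact fun x hx => ((hRd x (hsub hx)).continuousAt).continuousWithinAt
    · rw [interior_Icc]
      exact fun x hx =>
        ((hRd x (hsub (Ioo_subset_Icc_self hx))).differentiableAt).differentiableWithinAt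
    · rw [interior_Icc]
      intro x hx
      have hx' := hsub (Ioo_subset_Icc_self hx)
      rw [(hRd x hx').deriv]
      exact div_nonneg (hWnonneg x hx') (sq_nonneg _)
  have hr := hRmono (left_mem_Icc.mpr ht1) (right_mem_Icc.mpr ht1) ht1
  -- conclude
  have htIoc : t ∈ Ioc (0:ℝ) 1 := ⟨ht0', ht1⟩
  have h1Ioc : (1:ℝ) ∈ Ioc (0:ℝ) 1 := ⟨zero_lt_one, le_refl 1⟩
  have hwt := wpos t htIoc
  have hw1 := wpos 1 h1Ioc
  have hslt := pl t htIoc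
  have hsl1 := pl 1 h1Ioc
  have key : sl t / sl 1 ≤ w t / w 1 := by
    rw [div_le_div_iff₀ hsl1 hw1]
    have := (div_le_div_iff₀ hwt hw1).mp hr
    nlinarith
  calc sl t / sl 1 ≤ w t / w 1 := key
    _ = (s₀ t / s₀ 1) ^ (1 - l) * (s₁ t / s₁ 1) ^ l := by
        rw [Real.div_rpow (p₀ t htIoc).le (p₀ 1 h1Ioc).le,
          Real.div_rpow (p₁ t htIoc).le (p₁ 1 h1Ioc).le]
        simp only [hw]
        field_simp

end Helpers

/-- Joint convexity of `G(x, y, κ) = log(σ_{κ⁻}^{(1-t)} e^x + σ_{κ⁺}^{(t)} e^y)` in `(x, y, κ)`: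
along any segment from `(x₀, y₀, κ₀)` to `(x₁, y₁, κ₁)` (with the distortion coefficients
expressed through the corresponding sin-solutions, all finite), the convexity inequality holds.
Here `κ⁻(s) = κ(1-s)`, `κ⁺ = κ`, and `σ_κ^{(t)} = 𝔰_κ(t)/𝔰_κ(1)`. -/
theorem G_jointly_convex (t : ℝ) (ht : t ∈ Icc (0:ℝ) 1)
    (l : ℝ) (hl : l ∈ Icc (0:ℝ) 1)
    (x₀ y₀ x₁ y₁ : ℝ)
    (κ₀ κ₁ : ℝ → ℝ) (hκ₀ : ContinuousOn κ₀ (Icc 0 1)) (hκ₁ : ContinuousOn κ₁ (Icc 0 1))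
    (sp₀ sp₀' sm₀ sm₀' sp₁ sp₁' sm₁ sm₁' spl spl' sml sml' : ℝ → ℝ)
    (hsp₀ : IsSinSolution κ₀ sp₀ sp₀' 1)
    (hsm₀ : IsSinSolution (fun r => κ₀ (1 - r)) sm₀ sm₀' 1)
    (hsp₁ : IsSinSolution κ₁ sp₁ sp₁' 1)
    (hsm₁ : IsSinSolution (fun r => κ₁ (1 - r)) sm₁ sm₁' 1)
    (hspl : IsSinSolution (fun r => (1 - l) * κ₀ r + l * κ₁ r) spl spl' 1)
    (hsml : IsSinSolution (fun r => (1 - l) * κ₀ (1 - r) + l * κ₁ (1 - r)) sml sml' 1)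
    (hp₀ : ∀ r ∈ Ioc (0:ℝ) 1, 0 < sp₀ r) (hm₀ : ∀ r ∈ Ioc (0:ℝ) 1, 0 < sm₀ r)
    (hp₁ : ∀ r ∈ Ioc (0:ℝ) 1, 0 < sp₁ r) (hm₁ : ∀ r ∈ Ioc (0:ℝ) 1, 0 < sm₁ r)
    (hpl : ∀ r ∈ Ioc (0:ℝ) 1, 0 < spl r) (hml : ∀ r ∈ Ioc (0:ℝ) 1, 0 < sml r) :
    Real.log (sml (1 - t) / sml 1 * Real.exp ((1 - l) * x₀ + l * x₁) +
        spl t / spl 1 * Real.exp ((1 - l) * y₀ + l * y₁)) ≤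
      (1 - l) * Real.log (sm₀ (1 - t) / sm₀ 1 * Real.exp x₀ + sp₀ t / sp₀ 1 * Real.exp y₀) +
        l * Real.log (sm₁ (1 - t) / sm₁ 1 * Real.exp x₁ + sp₁ t / sp₁ 1 * Real.exp y₁) := by
  obtain ⟨ht0, ht1⟩ := ht
  obtain ⟨hl0, hl1⟩ := hl
  -- key comparison inequalities
  have key1 : spl t / spl 1 ≤ (sp₀ t / sp₀ 1) ^ (1 - l) * (sp₁ t / sp₁ 1) ^ l :=
    sin_ratio_le l hl0 hl1 κ₀ κ₁ sp₀ sp₀' sp₁ sp₁' spl spl' hsp₀ hsp₁ hspl hp₀ hp₁ hpl t ht0 ht1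
  have key2 : sml (1 - t) / sml 1 ≤
      (sm₀ (1 - t) / sm₀ 1) ^ (1 - l) * (sm₁ (1 - t) / sm₁ 1) ^ l :=
    sin_ratio_le l hl0 hl1 (fun r => κ₀ (1 - r)) (fun r => κ₁ (1 - r)) sm₀ sm₀' sm₁ sm₁'
      sml sml' hsm₀ hsm₁ hsml hm₀ hm₁ hml (1 - t) (by linarith) (by linarith)
  -- nonnegativity facts
  have nn : ∀ s : ℝ → ℝ, s 0 = 0 → (∀ r ∈ Ioc (0:ℝ) 1, 0 < s r) →
      ∀ r, 0 ≤ r → r ≤ 1 → 0 ≤ s r := by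
    intro s h0 hp r hr0 hr1
    rcases eq_or_lt_of_le hr0 with he | hlt
    · rw [← he, h0]
    · exact (hp r ⟨hlt, hr1⟩).le
  -- positivity of the three sums
  have habc : ∀ sm sp : ℝ → ℝ, sm 0 = 0 → sp 0 = 0 →
      (∀ r ∈ Ioc (0:ℝ) 1, 0 < sm r) → (∀ r ∈ Ioc (0:ℝ) 1, 0 < sp r) → ∀ u v : ℝ,
      0 < sm (1 - t) / sm 1 * Real.exp u + sp t / sp 1 * Real.exp v := by
    intro sm sp h0m h0p hsm hsp u v
    have h1 : 0 < sm 1 := hsm 1 ⟨zero_lt_one, le_refl 1⟩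
    have h2 : 0 < sp 1 := hsp 1 ⟨zero_lt_one, le_refl 1⟩
    rcases lt_or_ge t 1 with h | h
    · have hm : 0 < sm (1 - t) := hsm _ ⟨by linarith, by linarith⟩
      have hnp : 0 ≤ sp t := nn sp h0p hsp t ht0 ht1
      have := mul_pos (div_pos hm h1) (Real.exp_pos u)
      have := mul_nonneg (div_nonneg hnp h2.le) (Real.exp_pos v).le
      linarith
    · have ht' : t = 1 := le_antisymm ht1 h
      have hp' : 0 < sp t := by rw [ht']; exact hsp 1 ⟨zero_lt_one, le_refl 1⟩
      have hnm : 0 ≤ sm (1 - t) := nn sm h0m hsm (1 - t) (by linarith) (by linarith)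
      have := mul_pos (div_pos hp' h2) (Real.exp_pos v)
      have := mul_nonneg (div_nonneg hnm h1.le) (Real.exp_pos u).le
      linarith
  have hAL := habc sml spl hsml.1 hspl.1 hml hpl ((1 - l) * x₀ + l * x₁) ((1 - l) * y₀ + l * y₁)
  have hA₀ := habc sm₀ sp₀ hsm₀.1 hsp₀.1 hm₀ hp₀ x₀ y₀
  have hA₁ := habc sm₁ sp₁ hsm₁.1 hsp₁.1 hm₁ hp₁ x₁ y₁
  -- nonnegativity of individual coefficients
  have nm₀ : 0 ≤ sm₀ (1 - t) / sm₀ 1 :=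
    div_nonneg (nn sm₀ hsm₀.1 hm₀ _ (by linarith) (by linarith))
      (hm₀ 1 ⟨zero_lt_one, le_refl 1⟩).le
  have nm₁ : 0 ≤ sm₁ (1 - t) / sm₁ 1 :=
    div_nonneg (nn sm₁ hsm₁.1 hm₁ _ (by linarith) (by linarith))
      (hm₁ 1 ⟨zero_lt_one, le_refl 1⟩).le
  have np₀ : 0 ≤ sp₀ t / sp₀ 1 :=
    div_nonneg (nn sp₀ hsp₀.1 hp₀ _ ht0 ht1) (hp₀ 1 ⟨zero_lt_one, le_refl 1⟩).le
  have np₁ : 0 ≤ sp₁ t / sp₁ 1 :=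
    div_nonneg (nn sp₁ hsp₁.1 hp₁ _ ht0 ht1) (hp₁ 1 ⟨zero_lt_one, le_refl 1⟩).le
  -- exponential splitting
  have ex : Real.exp ((1 - l) * x₀ + l * x₁) = Real.exp x₀ ^ (1 - l) * Real.exp x₁ ^ l := by
    rw [Real.exp_add, mul_comm (1 - l) x₀, mul_comm l x₁, Real.exp_mul, Real.exp_mul]
  have ey : Real.exp ((1 - l) * y₀ + l * y₁) = Real.exp y₀ ^ (1 - l) * Real.exp y₁ ^ l := by
    rw [Real.exp_add, mul_comm (1 - l) y₀, mul_comm l y₁, Real.exp_mul, Real.exp_mul]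
  -- termwise bounds
  have term1 : sml (1 - t) / sml 1 * Real.exp ((1 - l) * x₀ + l * x₁) ≤
      (sm₀ (1 - t) / sm₀ 1 * Real.exp x₀) ^ (1 - l) *
        (sm₁ (1 - t) / sm₁ 1 * Real.exp x₁) ^ l := by
    rw [Real.mul_rpow nm₀ (Real.exp_pos x₀).le, Real.mul_rpow nm₁ (Real.exp_pos x₁).le, ex]
    calc sml (1 - t) / sml 1 * (Real.exp x₀ ^ (1 - l) * Real.exp x₁ ^ l)
        ≤ (sm₀ (1 - t) / sm₀ 1) ^ (1 - l) * (sm₁ (1 - t) / sm₁ 1) ^ l *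
            (Real.exp x₀ ^ (1 - l) * Real.exp x₁ ^ l) := by
          apply mul_le_mul_of_nonneg_right key2
          exact mul_nonneg (Real.rpow_nonneg (Real.exp_pos _).le _)
            (Real.rpow_nonneg (Real.exp_pos _).le _)
      _ = _ := by ring
  have term2 : spl t / spl 1 * Real.exp ((1 - l) * y₀ + l * y₁) ≤
      (sp₀ t / sp₀ 1 * Real.exp y₀) ^ (1 - l) * (sp₁ t / sp₁ 1 * Real.exp y₁) ^ l := by
    rw [Real.mul_rpow np₀ (Real.exp_pos y₀).le, Real.mul_rpow np₁ (Real.exp_pos y₁).le, ey]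
    calc spl t / spl 1 * (Real.exp y₀ ^ (1 - l) * Real.exp y₁ ^ l)
        ≤ (sp₀ t / sp₀ 1) ^ (1 - l) * (sp₁ t / sp₁ 1) ^ l *
            (Real.exp y₀ ^ (1 - l) * Real.exp y₁ ^ l) := by
          apply mul_le_mul_of_nonneg_right key1
          exact mul_nonneg (Real.rpow_nonneg (Real.exp_pos _).le _)
            (Real.rpow_nonneg (Real.exp_pos _).le _)
      _ = _ := by ring
  -- Hölder
  have hold := holder2 (a₀ := sm₀ (1 - t) / sm₀ 1 * Real.exp x₀)
    (a₁ := sm₁ (1 - t) / sm₁ 1 * Real.exp x₁)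
    (b₀ := sp₀ t / sp₀ 1 * Real.exp y₀) (b₁ := sp₁ t / sp₁ 1 * Real.exp y₁)
    hl0 hl1 (mul_nonneg nm₀ (Real.exp_pos _).le) (mul_nonneg nm₁ (Real.exp_pos _).le)
    (mul_nonneg np₀ (Real.exp_pos _).le) (mul_nonneg np₁ (Real.exp_pos _).le)
  have main : sml (1 - t) / sml 1 * Real.exp ((1 - l) * x₀ + l * x₁) +
      spl t / spl 1 * Real.exp ((1 - l) * y₀ + l * y₁) ≤
      (sm₀ (1 - t) / sm₀ 1 * Real.exp x₀ + sp₀ t / sp₀ 1 * Real.exp y₀) ^ (1 - l) *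
        (sm₁ (1 - t) / sm₁ 1 * Real.exp x₁ + sp₁ t / sp₁ 1 * Real.exp y₁) ^ l := by
    calc _ ≤ _ := add_le_add term1 term2
      _ ≤ _ := hold
  calc Real.log (sml (1 - t) / sml 1 * Real.exp ((1 - l) * x₀ + l * x₁) +
        spl t / spl 1 * Real.exp ((1 - l) * y₀ + l * y₁))
      ≤ Real.log ((sm₀ (1 - t) / sm₀ 1 * Real.exp x₀ + sp₀ t / sp₀ 1 * Real.exp y₀) ^ (1 - l) *
          (sm₁ (1 - t) / sm₁ 1 * Real.exp x₁ + sp₁ t / sp₁ 1 * Real.exp y₁) ^ l) :=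
        Real.log_le_log hAL main
    _ = _ := by
        rw [Real.log_mul (Real.rpow_pos_of_pos hA₀ _).ne' (Real.rpow_pos_of_pos hA₁ _).ne',
          Real.log_rpow hA₀, Real.log_rpow hA₁]
end

section
/- Let κ : [0,θ] → ℝ be continuous with 𝔰_κ > 0 on (0,θ]. Then the right derivative at t = 0 of σ_κ^{(t)}(θ) satisfies (d/dt)|_{t=0} σ_κ^{(t)}(θ) = 1 + ∫₀¹ (1-s) θ² κ(sθ) σ_κ^{(s)}(θ) ds. -/
open Set

/-- The right derivative at `t = 0` of `t ↦ σ_κ^{(t)}(θ)` equals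
`1 + ∫₀¹ (1-s) θ² κ(sθ) σ_κ^{(s)}(θ) ds`. -/
theorem distortion_right_deriv_at_zero (θ : ℝ) (hθ : 0 < θ)
    (κ s s' : ℝ → ℝ) (hκ : ContinuousOn κ (Icc 0 θ))
    (hs : IsSinSolution κ s s' θ)
    (hpos : ∀ r ∈ Ioc (0:ℝ) θ, 0 < s r) :
    HasDerivWithinAt (fun t : ℝ => s (t * θ) / s θ)
      (1 + ∫ r in (0:ℝ)..1, (1 - r) * θ ^ 2 * κ (r * θ) * (s (r * θ) / s θ))
      (Ici 0) 0 := by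
  obtain ⟨hs0, hs'0, hderiv⟩ := hs
  have hsθ : 0 < s θ := hpos θ ⟨hθ, le_refl θ⟩
  have hsθ' : s θ ≠ 0 := ne_of_gt hsθ
  have hθ' : θ ≠ 0 := ne_of_gt hθ
  -- continuity of s and s' on [0, θ]
  have hscont : ContinuousOn s (Icc 0 θ) := fun x hx =>
    ((hderiv x hx).1.continuousAt).continuousWithinAt
  -- key integral identity via FTC
  have hG : ∀ x ∈ uIcc (0:ℝ) θ,
      HasDerivAt (fun x => (θ - x) * s' x + s x) ((θ - x) * (-(κ x * s x))) x := by
    intro x hx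
    rw [uIcc_of_le hθ.le] at hx
    have h1 := (hderiv x hx).1
    have h2 := (hderiv x hx).2
    have : HasDerivAt (fun x => (θ - x) * s' x + s x)
        ((0 - 1) * s' x + (θ - x) * (-(κ x * s x)) + s' x) x :=
      (((hasDerivAt_const x θ).sub (hasDerivAt_id x)).mul h2).add h1
    convert this using 1
    ring
  have hint : IntervalIntegrable (fun x => (θ - x) * (-(κ x * s x)))
      MeasureTheory.volume 0 θ := by
    apply ContinuousOn.intervalIntegrable
    rw [uIcc_of_le hθ.le]
    exact ((continuousOn_const.sub continuousOn_id).mul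
      ((hκ.mul hscont).neg))
  have key : (∫ x in (0:ℝ)..θ, (θ - x) * (-(κ x * s x))) = s θ - θ := by
    rw [intervalIntegral.integral_eq_sub_of_hasDerivAt hG hint]
    simp [hs0, hs'0]
  -- rewrite the integral in the goal
  have hI : (∫ r in (0:ℝ)..1, (1 - r) * θ ^ 2 * κ (r * θ) * (s (r * θ) / s θ))
      = (θ - s θ) / s θ := by
    have heq : ∀ r : ℝ, (1 - r) * θ ^ 2 * κ (r * θ) * (s (r * θ) / s θ)
        = (fun x => -(θ / s θ) * ((θ - x) * (-(κ x * s x)))) (r * θ) := by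
      intro r
      simp only
      field_simp
    rw [intervalIntegral.integral_congr (fun r _ => heq r),
      intervalIntegral.integral_comp_mul_right
        (fun x => -(θ / s θ) * ((θ - x) * (-(κ x * s x)))) hθ',
      intervalIntegral.integral_const_mul]
    simp only [zero_mul, one_mul, key, smul_eq_mul]
    field_simp
    ring
  -- derivative computation
  have hd0 : HasDerivAt s (s' 0) 0 := (hderiv 0 ⟨le_refl 0, hθ.le⟩).1
  have hcomp : HasDerivAt (fun t : ℝ => s (t * θ)) (s' 0 * (1 * θ)) 0 := by
    have hd0' : HasDerivAt s (s' 0) (id (0:ℝ) * θ) := by simpa using hd0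
    have := hd0'.comp 0 ((hasDerivAt_id (0:ℝ)).mul_const θ)
    simpa [Function.comp_def] using this
  have hfinal : HasDerivAt (fun t : ℝ => s (t * θ) / s θ) (s' 0 * (1 * θ) / s θ) 0 :=
    hcomp.div_const (s θ)
  have : (1 : ℝ) + (θ - s θ) / s θ = s' 0 * (1 * θ) / s θ := by
    rw [hs'0]; field_simp; ring
  rw [hI, this]
  exact hfinal.hasDerivWithinAt
end

section
/- Let κ : [0,L] → ℝ be continuous. For fixed t ∈ [0,1], the map h ↦ σ_κ^{(t)}(h) is twice differentiable at h = 0 with Taylor expansion σ_κ^{(t)}(h) = t[1 + (1/6)(1-t²)κ(0)h²] + o(h²). -/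
open Set Asymptotics Filter Topology

/-- Mean value inequality on `[0, b]` starting from `f 0 = 0`. -/
lemma mvt_aux {f f' : ℝ → ℝ} {b C : ℝ} (h0 : f 0 = 0)
    (hd : ∀ u ∈ Set.Icc (0:ℝ) b, HasDerivAt f (f' u) u)
    (hC : ∀ u ∈ Set.Icc (0:ℝ) b, |f' u| ≤ C) (hb : 0 ≤ b) : |f b| ≤ C * b := by
  have := (convex_Icc (0:ℝ) b).norm_image_sub_le_of_norm_hasDerivWithin_le
    (fun u hu => (hd u hu).hasDerivWithinAt) (fun u hu => hC u hu)
    (Set.left_mem_Icc.2 hb) (Set.right_mem_Icc.2 hb)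
  simpa [h0, Real.norm_eq_abs, abs_of_nonneg hb] using this

/-- Taylor expansion of the distortion coefficient in the length variable:
`σ_κ^{(t)}(h) = t[1 + (1/6)(1-t²)κ(0)h²] + o(h²)` as `h → 0⁺`. -/
theorem distortion_taylor (L : ℝ) (hL : 0 < L)
    (κ s s' : ℝ → ℝ) (hκ : ContinuousOn κ (Icc 0 L))
    (hs : IsSinSolution κ s s' L)
    (t : ℝ) (ht : t ∈ Icc (0:ℝ) 1) :
    (fun h : ℝ => s (t * h) / s h - t * (1 + 1 / 6 * (1 - t ^ 2) * κ 0 * h ^ 2))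
      =o[nhdsWithin 0 (Ioi 0)] (fun h : ℝ => h ^ 2) := by
  obtain ⟨hs0, hs'0, hder⟩ := hs
  obtain ⟨ht0, ht1⟩ := ht
  have h0L : (0:ℝ) ∈ Icc (0:ℝ) L := ⟨le_refl 0, hL.le⟩
  set g : ℝ → ℝ := fun x => s x - x + κ 0 * x ^ 3 / 6 with hgdef
  set g' : ℝ → ℝ := fun x => s' x - 1 + κ 0 * x ^ 2 / 2 with hg'def
  set g'' : ℝ → ℝ := fun x => -(κ x * s x) + κ 0 * x with hg''def
  have hg0 : g 0 = 0 := by simp [hgdef, hs0]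
  have hg'0 : g' 0 = 0 := by simp [hg'def, hs'0]
  have hgderiv : ∀ x ∈ Icc (0:ℝ) L, HasDerivAt g (g' x) x := by
    intro x hx
    have h1 := (hder x hx).1
    have h3 : HasDerivAt (fun x : ℝ => κ 0 * x ^ 3 / 6) (κ 0 * x ^ 2 / 2) x := by
      have := ((hasDerivAt_pow 3 x).const_mul (κ 0)).div_const 6
      exact this.congr_deriv (by ring)
    have h4 := (h1.sub (hasDerivAt_id x)).add h3
    exact h4.congr_deriv (by simp only [hg'def])
  have hg'deriv : ∀ x ∈ Icc (0:ℝ) L, HasDerivAt g' (g'' x) x := by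
    intro x hx
    have h1 := (hder x hx).2
    have h3 : HasDerivAt (fun x : ℝ => κ 0 * x ^ 2 / 2) (κ 0 * x) x := by
      have := ((hasDerivAt_pow 2 x).const_mul (κ 0)).div_const 2
      exact this.congr_deriv (by ring)
    have h4 := (h1.sub (hasDerivAt_const x 1)).add h3
    exact h4.congr_deriv (by simp only [hg''def]; ring)
  set l : Filter ℝ := nhdsWithin 0 (Icc 0 L) with hldef
  have hκl : Tendsto κ l (𝓝 (κ 0)) := hκ 0 h0L
  have hs1 : (fun x => s x - x) =o[𝓝 (0:ℝ)] fun x => x := by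
    have h := (hder 0 h0L).1
    rw [hasDerivAt_iff_isLittleO] at h
    simpa [hs0, hs'0] using h
  have hg''o : g'' =o[l] fun x => x := by
    have h1 : (fun x => κ x * (s x - x)) =o[l] fun x => x := by
      simpa using (hκl.isBigO_one ℝ).mul_isLittleO (hs1.mono nhdsWithin_le_nhds)
    have h2 : (fun x => (κ 0 - κ x) * x) =o[l] fun x => x := by
      have ht'' : Tendsto (fun x => κ 0 - κ x) l (𝓝 (κ 0 - κ 0)) :=
        tendsto_const_nhds.sub hκl
      have ht' : Tendsto (fun x => κ 0 - κ x) l (𝓝 0) := by simpa using ht''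
      simpa using ((isLittleO_one_iff ℝ).2 ht').mul_isBigO (isBigO_refl (fun x : ℝ => x) l)
    have h3 := h1.neg_left.add h2
    refine h3.congr_left fun x => ?_
    simp only [hg''def]
    ring
  -- quantitative bound on g'
  have hg'q : ∀ ε : ℝ, 0 < ε → ∃ δ : ℝ, 0 < δ ∧
      ∀ x : ℝ, 0 ≤ x → x ≤ δ → x ≤ L → |g' x| ≤ ε * x ^ 2 := by
    intro ε hε
    have h := hg''o.def hε
    rw [hldef, eventually_nhdsWithin_iff, Metric.eventually_nhds_iff] at h
    obtain ⟨δ₀, hδ₀, hb⟩ := h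
    refine ⟨δ₀ / 2, by positivity, fun x hx0 hxδ hxL => ?_⟩
    have key : |g' x| ≤ (ε * x) * x := by
      refine mvt_aux hg'0 (fun u hu => hg'deriv u ⟨hu.1, hu.2.trans hxL⟩) ?_ hx0
      intro u hu
      have hud : dist u (0:ℝ) < δ₀ := by
        rw [Real.dist_eq, sub_zero, abs_of_nonneg hu.1]
        calc u ≤ x := hu.2
          _ ≤ δ₀ / 2 := hxδ
          _ < δ₀ := by linarith
      have := hb hud ⟨hu.1, hu.2.trans hxL⟩
      rw [Real.norm_eq_abs, Real.norm_eq_abs, abs_of_nonneg hu.1] at this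
      calc |g'' u| ≤ ε * u := this
        _ ≤ ε * x := mul_le_mul_of_nonneg_left hu.2 hε.le
    calc |g' x| ≤ ε * x * x := key
      _ = ε * x ^ 2 := by ring
  -- quantitative bound on g
  have hgq : ∀ ε : ℝ, 0 < ε → ∃ δ : ℝ, 0 < δ ∧
      ∀ x : ℝ, 0 ≤ x → x ≤ δ → x ≤ L → |g x| ≤ ε * x ^ 3 := by
    intro ε hε
    obtain ⟨δ, hδ, hb⟩ := hg'q ε hε
    refine ⟨δ, hδ, fun x hx0 hxδ hxL => ?_⟩
    have key : |g x| ≤ (ε * x ^ 2) * x := by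
      refine mvt_aux hg0 (fun u hu => hgderiv u ⟨hu.1, hu.2.trans hxL⟩) ?_ hx0
      intro u hu
      calc |g' u| ≤ ε * u ^ 2 := hb u hu.1 (hu.2.trans hxδ) (hu.2.trans hxL)
        _ ≤ ε * x ^ 2 := mul_le_mul_of_nonneg_left (pow_le_pow_left₀ hu.1 hu.2 2) hε.le
    calc |g x| ≤ ε * x ^ 2 * x := key
      _ = ε * x ^ 3 := by ring
  set lp : Filter ℝ := nhdsWithin 0 (Ioi 0) with hlpdef
  have hmem : ∀ᶠ h in lp, 0 < h ∧ h < L := by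
    have h1 : ∀ᶠ h : ℝ in lp, h ∈ Ioi (0:ℝ) := eventually_mem_nhdsWithin
    have h2 : ∀ᶠ h : ℝ in lp, |h - 0| < L :=
      (eventually_abs_sub_lt (0:ℝ) hL).filter_mono nhdsWithin_le_nhds
    filter_upwards [h1, h2] with h hh1 hh2
    rw [sub_zero] at hh2
    exact ⟨hh1, lt_of_le_of_lt (le_abs_self h) hh2⟩
  have hshalf : ∀ᶠ h in lp, h / 2 ≤ s h := by
    have h1 : ∀ᶠ h : ℝ in lp, |s h - h| ≤ 1 / 2 * |h| := by
      have := hs1.def (by norm_num : (0:ℝ) < 1/2)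
      exact (this.filter_mono nhdsWithin_le_nhds).mono fun h hh => by
        simpa [Real.norm_eq_abs] using hh
    filter_upwards [h1, hmem] with h hh1 ⟨hh0, _⟩
    rw [abs_of_pos hh0] at hh1
    have := abs_le.1 hh1
    linarith [this.1]
  -- littleO bounds for g and g ∘ (t * ·)
  have hgo : g =o[lp] fun h => h ^ 3 := by
    rw [isLittleO_iff]
    intro ε hε
    obtain ⟨δ, hδ, hb⟩ := hgq ε hε
    have hδ' : ∀ᶠ h : ℝ in lp, |h - 0| < δ :=
      (eventually_abs_sub_lt (0:ℝ) hδ).filter_mono nhdsWithin_le_nhds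
    filter_upwards [hmem, hδ'] with h ⟨hh0, hhL⟩ hhδ
    rw [sub_zero] at hhδ
    have := hb h hh0.le (le_of_lt (lt_of_le_of_lt (le_abs_self h) hhδ)) hhL.le
    calc ‖g h‖ = |g h| := rfl
      _ ≤ ε * h ^ 3 := this
      _ = ε * ‖h ^ 3‖ := by rw [Real.norm_eq_abs, abs_of_nonneg (by positivity)]
  have hgto : (fun h => g (t * h)) =o[lp] fun h => h ^ 3 := by
    rw [isLittleO_iff]
    intro ε hε
    obtain ⟨δ, hδ, hb⟩ := hgq ε hε
    have hδ' : ∀ᶠ h : ℝ in lp, |h - 0| < δ :=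
      (eventually_abs_sub_lt (0:ℝ) hδ).filter_mono nhdsWithin_le_nhds
    filter_upwards [hmem, hδ'] with h ⟨hh0, hhL⟩ hhδ
    rw [sub_zero] at hhδ
    have hhδ' : h ≤ δ := le_of_lt (lt_of_le_of_lt (le_abs_self h) hhδ)
    have hth0 : 0 ≤ t * h := mul_nonneg ht0 hh0.le
    have hthh : t * h ≤ h := by nlinarith
    have := hb (t * h) hth0 (hthh.trans hhδ') (hthh.trans hhL.le)
    calc ‖g (t * h)‖ = |g (t * h)| := rfl
      _ ≤ ε * (t * h) ^ 3 := this
      _ ≤ ε * h ^ 3 := by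
        have : (t * h) ^ 3 ≤ h ^ 3 := pow_le_pow_left₀ hth0 hthh 3
        nlinarith
      _ = ε * ‖h ^ 3‖ := by rw [Real.norm_eq_abs, abs_of_nonneg (by positivity)]
  set c : ℝ := (1 - t ^ 2) * κ 0 / 6 with hcdef
  -- the numerator is o(h^3)
  have hN : (fun h => g (t * h) - t * g h - t * c * h ^ 2 * g h + t * c * κ 0 * h ^ 5 / 6)
      =o[lp] fun h => h ^ 3 := by
    have h2 : (fun h => t * g h) =o[lp] fun h => h ^ 3 := hgo.const_mul_left t
    have h3 : (fun h => t * c * h ^ 2 * g h) =o[lp] fun h => h ^ 3 := by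
      have hb : (fun h : ℝ => t * c * h ^ 2) =O[lp] (fun _ => (1:ℝ)) := by
        refine Filter.Tendsto.isBigO_one ℝ (c := t * c * 0 ^ 2) ?_
        exact ((continuous_const.mul (continuous_pow 2)).tendsto 0).mono_left
          nhdsWithin_le_nhds
      simpa using hb.mul_isLittleO hgo
    have h4 : (fun h : ℝ => t * c * κ 0 * h ^ 5 / 6) =o[lp] fun h => h ^ 3 := by
      have h5 : (fun h : ℝ => h ^ 2) =o[lp] (fun _ => (1:ℝ)) := by
        refine (isLittleO_one_iff ℝ).2 ?_
        have := (continuous_pow 2).tendsto (0:ℝ)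
        simpa using this.mono_left nhdsWithin_le_nhds
      have h6 : (fun h : ℝ => h ^ 5) =o[lp] fun h => h ^ 3 := by
        have := h5.mul_isBigO (isBigO_refl (fun h : ℝ => h ^ 3) lp)
        refine this.congr' (Eventually.of_forall fun h => by ring) ?_
        exact Eventually.of_forall fun h => by ring
      have := h6.const_mul_left (t * c * κ 0 / 6)
      refine this.congr_left fun h => by ring
    exact ((hgto.sub h2).sub h3).add h4
  have hinv : (fun h => (s h)⁻¹) =O[lp] fun h => h⁻¹ := by
    rw [isBigO_iff]
    refine ⟨2, ?_⟩
    filter_upwards [hmem, hshalf] with h ⟨hh0, _⟩ hhalf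
    have hsh : 0 < s h := lt_of_lt_of_le (by positivity) hhalf
    rw [Real.norm_eq_abs, Real.norm_eq_abs, abs_of_pos (inv_pos.2 hsh),
      abs_of_pos (inv_pos.2 hh0)]
    have : (s h)⁻¹ ≤ (h / 2)⁻¹ := by
      apply inv_anti₀ (by positivity) hhalf
    calc (s h)⁻¹ ≤ (h / 2)⁻¹ := this
      _ = 2 * h⁻¹ := by rw [div_eq_mul_inv, mul_inv, mul_comm]; norm_num
  have main := hN.mul_isBigO hinv
  refine main.congr' ?_ ?_
  · filter_upwards [hmem, hshalf] with h ⟨hh0, _⟩ hhalf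
    have hsh : 0 < s h := lt_of_lt_of_le (by positivity) hhalf
    have hsne : s h ≠ 0 := hsh.ne'
    simp only [hgdef, hcdef]
    field_simp
    ring
  · filter_upwards [hmem] with h ⟨hh0, _⟩
    rw [pow_succ, pow_succ, mul_assoc, mul_inv_cancel₀ hh0.ne', mul_one]
end

section
/- Let κ : [0,θ] → ℝ be continuous with 𝔰_κ > 0 on (0,θ], κ⁻(s)=κ(θ-s), and define φ(t) = σ_{κ⁻}^{(1-t)}(θ) + σ_{κ⁺}^{(t)}(θ) - 1 for t ∈ [0,1]. Then φ solves φ''(t) + κ(tθ)θ²(φ(t)+1) = 0 with φ(0) = φ(1) = 0, and admits the representation φ(t) = ∫₀¹ g(τ,t) κ(τθ)θ² [σ_{κ⁻}^{(1-τ)}(θ) + σ_{κ⁺}^{(τ)}(θ)] dτ, where g is the Green function of [0,1]. -/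
open Set

/-- `φ(t) = σ_{κ⁻}^{(1-t)}(θ) + σ_{κ⁺}^{(t)}(θ) - 1` solves
`φ'' + κ(tθ)θ²(φ+1) = 0` with `φ(0) = φ(1) = 0`, and admits the Green-function
representation `φ(t) = ∫₀¹ g(τ,t) κ(τθ)θ² [σ_{κ⁻}^{(1-τ)}(θ) + σ_{κ⁺}^{(τ)}(θ)] dτ`. -/
theorem phi_ode_and_green (θ : ℝ) (hθ : 0 < θ)
    (κ sp sp' sm sm' : ℝ → ℝ) (hκ : ContinuousOn κ (Icc 0 θ))
    (hsp : IsSinSolution κ sp sp' θ)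
    (hsm : IsSinSolution (fun r => κ (θ - r)) sm sm' θ)
    (hppos : ∀ r ∈ Ioc (0:ℝ) θ, 0 < sp r)
    (hmpos : ∀ r ∈ Ioc (0:ℝ) θ, 0 < sm r) :
    (fun t : ℝ => sm ((1 - t) * θ) / sm θ + sp (t * θ) / sp θ - 1) 0 = 0 ∧
    (fun t : ℝ => sm ((1 - t) * θ) / sm θ + sp (t * θ) / sp θ - 1) 1 = 0 ∧
    (∃ φ' : ℝ → ℝ, ∀ t ∈ Icc (0:ℝ) 1,
      HasDerivAt (fun t : ℝ => sm ((1 - t) * θ) / sm θ + sp (t * θ) / sp θ - 1) (φ' t) t ∧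
      HasDerivAt φ'
        (-(κ (t * θ) * θ ^ 2 * ((sm ((1 - t) * θ) / sm θ + sp (t * θ) / sp θ - 1) + 1))) t) ∧
    (∀ t ∈ Icc (0:ℝ) 1,
      sm ((1 - t) * θ) / sm θ + sp (t * θ) / sp θ - 1 =
        ∫ τ in (0:ℝ)..1,
          (min τ t * (1 - max τ t)) * κ (τ * θ) * θ ^ 2 *
            (sm ((1 - τ) * θ) / sm θ + sp (τ * θ) / sp θ)) := by
  obtain ⟨hsp0, hsp'0, hspD⟩ := hsp
  obtain ⟨hsm0, hsm'0, hsmD⟩ := hsm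
  have hspθ : sp θ ≠ 0 := ne_of_gt (hppos θ ⟨hθ, le_rfl⟩)
  have hsmθ : sm θ ≠ 0 := ne_of_gt (hmpos θ ⟨hθ, le_rfl⟩)
  set φ : ℝ → ℝ := fun t => sm ((1 - t) * θ) / sm θ + sp (t * θ) / sp θ - 1 with hφ
  set ψ : ℝ → ℝ := fun t => sm' ((1 - t) * θ) * (-θ) / sm θ + sp' (t * θ) * θ / sp θ with hψ
  set f : ℝ → ℝ := fun t => κ (t * θ) * θ ^ 2 * (φ t + 1) with hf
  have hmem : ∀ t : ℝ, t ∈ Icc (0:ℝ) 1 → t * θ ∈ Icc (0:ℝ) θ := by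
    intro t ht
    exact ⟨mul_nonneg ht.1 hθ.le, by nlinarith [ht.2, hθ.le]⟩
  have hmem' : ∀ t : ℝ, t ∈ Icc (0:ℝ) 1 → (1 - t) * θ ∈ Icc (0:ℝ) θ := by
    intro t ht; exact hmem (1 - t) ⟨by linarith [ht.2], by linarith [ht.1]⟩
  have hDφ : ∀ t ∈ Icc (0:ℝ) 1, HasDerivAt φ (ψ t) t := by
    intro t ht
    have h1 : HasDerivAt (fun t : ℝ => t * θ) θ t := by
      simpa using (hasDerivAt_id t).mul_const θ
    have h2 : HasDerivAt (fun t : ℝ => (1 - t) * θ) (-θ) t := by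
      simpa using (((hasDerivAt_id t).const_sub 1).mul_const θ)
    have hp := ((hspD _ (hmem t ht)).1.comp t h1).div_const (sp θ)
    have hm := ((hsmD _ (hmem' t ht)).1.comp t h2).div_const (sm θ)
    have := (hm.add hp).sub_const 1
    convert this using 1
    all_goals rfl
  have hDψ : ∀ t ∈ Icc (0:ℝ) 1, HasDerivAt ψ (-(f t)) t := by
    intro t ht
    have h1 : HasDerivAt (fun t : ℝ => t * θ) θ t := by
      simpa using (hasDerivAt_id t).mul_const θ
    have h2 : HasDerivAt (fun t : ℝ => (1 - t) * θ) (-θ) t := by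
      simpa using (((hasDerivAt_id t).const_sub 1).mul_const θ)
    have hp := (((hspD _ (hmem t ht)).2.comp t h1).mul_const θ).div_const (sp θ)
    have hm := (((hsmD _ (hmem' t ht)).2.comp t h2).mul_const (-θ)).div_const (sm θ)
    have hθeq : θ - (1 - t) * θ = t * θ := by ring
    convert hm.add hp using 1
    rfl; rfl; rfl
    simp only [hf, hφ]
    rw [hθeq]
    field_simp
    ring
  have hφ0 : φ 0 = 0 := by
    simp [hφ, hsp0, div_self hsmθ]
  have hφ1 : φ 1 = 0 := by
    simp [hφ, hsm0, div_self hspθ]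
  refine ⟨hφ0, hφ1, ⟨ψ, fun t ht => ⟨hDφ t ht, hDψ t ht⟩⟩, ?_⟩
  -- continuity facts
  have hκc : ContinuousOn (fun τ : ℝ => κ (τ * θ)) (Icc 0 1) :=
    hκ.comp (continuous_id.mul continuous_const).continuousOn fun x hx => hmem x hx
  have hφc : ContinuousOn φ (Icc 0 1) := fun x hx =>
    (hDφ x hx).continuousAt.continuousWithinAt
  have hψc : ContinuousOn ψ (Icc 0 1) := fun x hx =>
    (hDψ x hx).continuousAt.continuousWithinAt
  have hfc : ContinuousOn f (Icc 0 1) :=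
    (hκc.mul continuousOn_const).mul (hφc.add continuousOn_const)
  intro t ht
  have ht0 : (0:ℝ) ≤ t := ht.1
  have ht1 : t ≤ 1 := ht.2
  have hsub1 : Icc (0:ℝ) t ⊆ Icc 0 1 := Icc_subset_Icc le_rfl ht1
  have hsub2 : Icc t (1:ℝ) ⊆ Icc 0 1 := Icc_subset_Icc ht0 le_rfl
  -- rewrite integrand
  have hintg : ∀ τ : ℝ,
      (min τ t * (1 - max τ t)) * κ (τ * θ) * θ ^ 2 *
        (sm ((1 - τ) * θ) / sm θ + sp (τ * θ) / sp θ)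
      = (min τ t * (1 - max τ t)) * f τ := by
    intro τ; simp only [hf, hφ]; ring
  rw [show (∫ τ in (0:ℝ)..1,
          (min τ t * (1 - max τ t)) * κ (τ * θ) * θ ^ 2 *
            (sm ((1 - τ) * θ) / sm θ + sp (τ * θ) / sp θ))
      = ∫ τ in (0:ℝ)..1, (min τ t * (1 - max τ t)) * f τ from by
    exact intervalIntegral.integral_congr fun τ _ => hintg τ]
  -- integrability of the Green integrand pieces
  have hgc : ContinuousOn (fun τ : ℝ => (min τ t * (1 - max τ t)) * f τ) (Icc 0 1) :=
    (((continuous_id.min continuous_const).mul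
      (continuous_const.sub (continuous_id.max continuous_const))).continuousOn).mul hfc
  have hI1 : IntervalIntegrable (fun τ : ℝ => (min τ t * (1 - max τ t)) * f τ)
      MeasureTheory.volume 0 t :=
    (hgc.mono hsub1).intervalIntegrable_of_Icc ht0
  have hI2 : IntervalIntegrable (fun τ : ℝ => (min τ t * (1 - max τ t)) * f τ)
      MeasureTheory.volume t 1 :=
    (hgc.mono hsub2).intervalIntegrable_of_Icc ht1
  rw [← intervalIntegral.integral_add_adjacent_intervals hI1 hI2]
  -- first piece
  have e1 : (∫ τ in (0:ℝ)..t, (min τ t * (1 - max τ t)) * f τ)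
      = ∫ τ in (0:ℝ)..t, (1 - t) * (τ * f τ) := by
    apply intervalIntegral.integral_congr
    intro τ hτ
    rw [uIcc_of_le ht0] at hτ
    simp only [min_eq_left hτ.2, max_eq_right hτ.2]; ring
  have e2 : (∫ τ in t..(1:ℝ), (min τ t * (1 - max τ t)) * f τ)
      = ∫ τ in t..(1:ℝ), t * ((1 - τ) * f τ) := by
    apply intervalIntegral.integral_congr
    intro τ hτ
    rw [uIcc_of_le ht1] at hτ
    simp only [min_eq_right hτ.1, max_eq_left hτ.1]; ring
  -- FTC for the two pieces
  have hAint : IntervalIntegrable (fun τ : ℝ => τ * f τ) MeasureTheory.volume 0 t :=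
    ((continuousOn_id.mul hfc).mono hsub1).intervalIntegrable_of_Icc ht0
  have hA : ∀ τ ∈ uIcc (0:ℝ) t,
      HasDerivAt (fun τ : ℝ => τ * (-(ψ τ)) + φ τ) (τ * f τ) τ := by
    intro τ hτ
    rw [uIcc_of_le ht0] at hτ
    have hτ1 : τ ∈ Icc (0:ℝ) 1 := hsub1 hτ
    have := ((hasDerivAt_id τ).mul (hDψ τ hτ1).neg).add (hDφ τ hτ1)
    convert this using 1
    rfl; rfl; rfl
    simp
  have hJ1 : (∫ τ in (0:ℝ)..t, τ * f τ) = -(t * ψ t) + φ t := by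
    rw [intervalIntegral.integral_eq_sub_of_hasDerivAt hA hAint]
    simp [hφ0]
  have hBint : IntervalIntegrable (fun τ : ℝ => (1 - τ) * f τ) MeasureTheory.volume t 1 :=
    (((continuous_const.sub continuous_id).continuousOn.mul hfc).mono
      hsub2).intervalIntegrable_of_Icc ht1
  have hB : ∀ τ ∈ uIcc t (1:ℝ),
      HasDerivAt (fun τ : ℝ => (1 - τ) * (-(ψ τ)) - φ τ) ((1 - τ) * f τ) τ := by
    intro τ hτ
    rw [uIcc_of_le ht1] at hτ
    have hτ1 : τ ∈ Icc (0:ℝ) 1 := hsub2 hτ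
    have := (((hasDerivAt_id τ).const_sub 1).mul (hDψ τ hτ1).neg).sub (hDφ τ hτ1)
    convert this using 1
    rfl; rfl; rfl
    simp
  have hJ2 : (∫ τ in t..(1:ℝ), (1 - τ) * f τ) = (1 - t) * ψ t + φ t := by
    rw [intervalIntegral.integral_eq_sub_of_hasDerivAt hB hBint]
    simp [hφ1]
    ring
  rw [e1, e2, intervalIntegral.integral_const_mul, intervalIntegral.integral_const_mul,
    hJ1, hJ2]
  ring
end

section
/- Let κ : [0,θ] → ℝ be continuous, 𝔰_κ > 0 on (0,θ], N > 0, and consider the rescaled coefficients σ_{κ/N}^{(t)}(θ). Define v_N(t) = N[σ_{(κ/N)⁻}^{(1-t)}(θ) + σ_{(κ/N)⁺}^{(t)}(θ) - 1]. Then as N → ∞, v_N converges pointwise on [0,1] to v(t) = ∫₀¹ g(s,t) κ(sθ)θ² ds, the solution of v'' + κ(tθ)θ² = 0 with v(0)=v(1)=0. -/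
open Set Filter

section AuxiliaryLemmas
open MeasureTheory intervalIntegral



/-- clamp to `[0, θ]`. -/
noncomputable def clampI (θ u : ℝ) : ℝ := max 0 (min u θ)

lemma continuous_clampI (θ : ℝ) : Continuous (clampI θ) :=
  continuous_const.max (continuous_id.min continuous_const)

lemma clampI_mem (θ : ℝ) (hθ : 0 ≤ θ) (u : ℝ) : clampI θ u ∈ Icc 0 θ :=
  ⟨le_max_left _ _, max_le hθ (min_le_right _ _)⟩

lemma clampI_eq {θ u : ℝ} (h : u ∈ Icc 0 θ) : clampI θ u = u := by
  simp [clampI, min_eq_left h.2, max_eq_right h.1]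

lemma sin_repr (θ : ℝ) (hθ : 0 < θ) (k : ℝ → ℝ) (hk : Continuous k)
    (N : ℝ) (hN : 0 < N) (s s' : ℝ → ℝ)
    (h0 : s 0 = 0) (h1 : s' 0 = 1)
    (hode : ∀ x ∈ Icc (0:ℝ) θ, HasDerivAt s (s' x) x ∧ HasDerivAt s' (-(k x / N * s x)) x) :
    ∀ r ∈ Icc (0:ℝ) θ, s r = r - (∫ u in (0:ℝ)..r, (r - u) * (k u * s u)) / N := by
  have hscont : ContinuousOn s (Icc 0 θ) := fun x hx => ((hode x hx).1).continuousAt.continuousWithinAt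
  have hs'cont : ContinuousOn s' (Icc 0 θ) := fun x hx => ((hode x hx).2).continuousAt.continuousWithinAt
  set E : ℝ → ℝ := fun u => k u * s (clampI θ u) with hE
  have hEcont : Continuous E := by
    exact hk.mul (hscont.comp_continuous (continuous_clampI θ) (clampI_mem θ hθ.le))
  have hEeq : ∀ u ∈ Icc (0:ℝ) θ, E u = k u * s u := by
    intro u hu; simp [hE, clampI_eq hu]
  set G1 : ℝ → ℝ := fun r => ∫ u in (0:ℝ)..r, E u with hG1def
  set G2 : ℝ → ℝ := fun r => ∫ u in (0:ℝ)..r, u * E u with hG2def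
  have hG1 : ∀ x : ℝ, HasDerivAt G1 (E x) x := by
    intro x
    exact integral_hasDerivAt_right (hEcont.intervalIntegrable 0 x)
      (hEcont.stronglyMeasurableAtFilter _ _) hEcont.continuousAt
  have hG2 : ∀ x : ℝ, HasDerivAt G2 (x * E x) x := by
    intro x
    exact integral_hasDerivAt_right ((continuous_id.mul hEcont).intervalIntegrable 0 x)
      ((continuous_id.mul hEcont).stronglyMeasurableAtFilter _ _)
      (continuous_id.mul hEcont).continuousAt
  -- step 1 : s' = 1 - G1 / N on [0, θ]
  have claim1 : ∀ x ∈ Icc (0:ℝ) θ, s' x = 1 - G1 x / N := by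
    have := eq_of_has_deriv_right_eq (f := s') (g := fun r => 1 - G1 r / N)
      (f' := fun x => -(E x / N)) (a := 0) (b := θ)
      (fun x hx => by
        have h2 := (hode x (Ico_subset_Icc_self hx)).2
        have : -(k x / N * s x) = -(E x / N) := by
          rw [hEeq x (Ico_subset_Icc_self hx)]; ring
        exact (this ▸ h2).hasDerivWithinAt)
      (fun x hx => by
        have : HasDerivAt (fun r => 1 - G1 r / N) (-(E x / N)) x :=
          HasDerivAt.const_sub 1 ((hG1 x).div_const N)
        exact this.hasDerivWithinAt)
      hs'cont
      (by fun_prop)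
      (by simp [h1, hG1def])
    exact fun x hx => this x hx
  -- step 2 : s r = r - (r * G1 r - G2 r)/N on [0, θ]
  have claim2 : ∀ x ∈ Icc (0:ℝ) θ, s x = x - (x * G1 x - G2 x) / N := by
    have := eq_of_has_deriv_right_eq (f := s) (g := fun r => r - (r * G1 r - G2 r) / N)
      (f' := fun x => 1 - G1 x / N) (a := 0) (b := θ)
      (fun x hx => by
        have h1' := (hode x (Ico_subset_Icc_self hx)).1
        rw [claim1 x (Ico_subset_Icc_self hx)] at h1'
        exact h1'.hasDerivWithinAt)
      (fun x hx => by
        have hprod : HasDerivAt (fun r => r * G1 r) (1 * G1 x + x * E x) x :=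
          (hasDerivAt_id x).mul (hG1 x)
        have : HasDerivAt (fun r => r - (r * G1 r - G2 r) / N)
            (1 - ((1 * G1 x + x * E x) - x * E x) / N) x :=
          (hasDerivAt_id x).sub ((hprod.sub (hG2 x)).div_const N)
        have heq : 1 - ((1 * G1 x + x * E x) - x * E x) / N = 1 - G1 x / N := by ring
        exact (heq ▸ this).hasDerivWithinAt)
      hscont
      (by fun_prop)
      (by simp [h0, hG1def, hG2def])
    exact fun x hx => this x hx
  intro r hr
  have key : ∫ u in (0:ℝ)..r, (r - u) * (k u * s u) = r * G1 r - G2 r := by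
    have hIcc : Icc (0:ℝ) r ⊆ Icc 0 θ := Icc_subset_Icc le_rfl hr.2
    have e1 : ∫ u in (0:ℝ)..r, (r - u) * (k u * s u) = ∫ u in (0:ℝ)..r, (r - u) * E u := by
      apply integral_congr
      intro u hu
      rw [uIcc_of_le hr.1] at hu
      show (r - u) * (k u * s u) = (r - u) * E u
      rw [hEeq u (hIcc hu)]
    rw [e1]
    have e2 : ∀ u, (r - u) * E u = r * E u - u * E u := fun u => by ring
    simp_rw [e2]
    have i1 : IntervalIntegrable (fun u => r * E u) MeasureTheory.volume 0 r :=
      (continuous_const.mul hEcont).intervalIntegrable 0 r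
    have i2 : IntervalIntegrable (fun u => u * E u) MeasureTheory.volume 0 r :=
      (continuous_id'.mul hEcont).intervalIntegrable 0 r
    rw [integral_sub i1 i2, intervalIntegral.integral_const_mul]
  rw [key]
  exact claim2 r hr

lemma sin_bound (θ : ℝ) (hθ : 0 < θ) (k : ℝ → ℝ) (hk : Continuous k)
    (M : ℝ) (hM : ∀ u ∈ Icc (0:ℝ) θ, |k u| ≤ M) (N : ℝ) (hN : max 1 (2*(M+1)*θ^2) ≤ N) (s s' : ℝ → ℝ)
    (h0 : s 0 = 0) (h1 : s' 0 = 1)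
    (hode : ∀ x ∈ Icc (0:ℝ) θ, HasDerivAt s (s' x) x ∧ HasDerivAt s' (-(k x / N * s x)) x) :
    ∀ r ∈ Icc (0:ℝ) θ, |s r| ≤ 2 * θ := by
  have hN0 : (0:ℝ) < N := lt_of_lt_of_le one_pos ((le_max_left _ _).trans hN)
  have hM0 : (0:ℝ) ≤ M := (abs_nonneg _).trans (hM 0 ⟨le_rfl, hθ.le⟩)
  have hrepr : ∀ r ∈ Icc (0:ℝ) θ, s r = r - (∫ u in (0:ℝ)..r, (r - u) * (k u * s u)) / N :=
    sin_repr θ hθ k hk N hN0 s s' h0 h1 hode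
  have hscont : ContinuousOn s (Icc 0 θ) := fun x hx => ((hode x hx).1).continuousAt.continuousWithinAt
  obtain ⟨x₀, hx₀, hmax⟩ := isCompact_Icc.exists_isMaxOn (nonempty_Icc.mpr hθ.le)
    (f := fun x => |s x|) (hscont.abs)
  set S := |s x₀| with hS
  have hS0 : 0 ≤ S := abs_nonneg _
  have hmax' : ∀ y ∈ Icc (0:ℝ) θ, |s y| ≤ S := fun y hy => hmax hy
  have hIb : |∫ u in (0:ℝ)..x₀, (x₀ - u) * (k u * s u)| ≤ θ * (M * S) * θ := by
    have h1' : |∫ u in (0:ℝ)..x₀, (x₀ - u) * (k u * s u)| ≤ θ * (M * S) * |x₀ - 0| := by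
      rw [← Real.norm_eq_abs]
      apply intervalIntegral.norm_integral_le_of_norm_le_const
      intro u hu
      rw [uIoc_of_le hx₀.1] at hu
      have huI : u ∈ Icc (0:ℝ) θ := ⟨hu.1.le, hu.2.trans hx₀.2⟩
      have e1 : |x₀ - u| ≤ θ := by
        rw [abs_of_nonneg (by linarith [hu.2])]; linarith [hu.1, hx₀.2]
      calc ‖(x₀ - u) * (k u * s u)‖ = |x₀ - u| * (|k u| * |s u|) := by
            simp [abs_mul]
        _ ≤ θ * (M * S) := by
            apply mul_le_mul e1 (mul_le_mul (hM u huI) (hmax' u huI) (abs_nonneg _) hM0)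
              (by positivity) hθ.le
    calc |∫ u in (0:ℝ)..x₀, (x₀ - u) * (k u * s u)| ≤ θ * (M * S) * |x₀ - 0| := h1'
      _ ≤ θ * (M * S) * θ := by
          apply mul_le_mul_of_nonneg_left _ (by positivity)
          rw [sub_zero, abs_of_nonneg hx₀.1]; exact hx₀.2
  have hSineq : S ≤ θ + θ * (M * S) * θ / N := by
    have := hrepr x₀ hx₀
    calc S = |s x₀| := rfl
      _ = |x₀ - (∫ u in (0:ℝ)..x₀, (x₀ - u) * (k u * s u)) / N| := by rw [this]
      _ ≤ |x₀| + |(∫ u in (0:ℝ)..x₀, (x₀ - u) * (k u * s u))| / N := by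
          rw [sub_eq_add_neg]
          refine (abs_add_le _ _).trans ?_
          rw [abs_neg, abs_div, abs_of_pos hN0]
      _ ≤ θ + θ * (M * S) * θ / N := by
          gcongr
          rw [abs_of_nonneg hx₀.1]; exact hx₀.2
  have hstep : θ * (M * S) * θ / N ≤ S / 2 := by
    rw [div_le_iff₀ hN0]
    have h2 : 2*(M+1)*θ^2 ≤ N := (le_max_right _ _).trans hN
    nlinarith [mul_le_mul_of_nonneg_left h2 (by positivity : (0:ℝ) ≤ S / 2)]
  have hS2 : S ≤ 2 * θ := by linarith
  exact fun r hr => (hmax' r hr).trans hS2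


lemma sin_tendsto (θ : ℝ) (hθ : 0 < θ) (k : ℝ → ℝ) (hk : Continuous k)
    (M : ℝ) (hM : ∀ u ∈ Icc (0:ℝ) θ, |k u| ≤ M)
    (s s' : ℝ → ℝ → ℝ)
    (hs : ∀ N > (0:ℝ), s N 0 = 0 ∧ s' N 0 = 1 ∧
      ∀ x ∈ Icc (0:ℝ) θ, HasDerivAt (s N) (s' N x) x ∧ HasDerivAt (s' N) (-(k x / N * s N x)) x)
    (r : ℝ) (hr : r ∈ Icc (0:ℝ) θ) :
    Tendsto (fun N : ℝ => N * (s N r - r)) atTop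
      (nhds (-∫ u in (0:ℝ)..r, (r - u) * (k u * u))) := by
  have hM0 : (0:ℝ) ≤ M := (abs_nonneg _).trans (hM 0 ⟨le_rfl, hθ.le⟩)
  rw [← tendsto_sub_nhds_zero_iff]
  apply squeeze_zero_norm' (a := fun N => 2*M^2*θ^5/N)
  · filter_upwards [eventually_ge_atTop (max 1 (2*(M+1)*θ^2))] with N hN
    have hN0 : (0:ℝ) < N := lt_of_lt_of_le one_pos ((le_max_left _ _).trans hN)
    obtain ⟨h0, h1, hode⟩ := hs N hN0
    have hrepr := sin_repr θ hθ k hk N hN0 (s N) (s' N) h0 h1 hode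
    have hb := sin_bound θ hθ k hk M hM N hN (s N) (s' N) h0 h1 hode
    have hscont : ContinuousOn (s N) (Icc 0 θ) :=
      fun x hx => ((hode x hx).1).continuousAt.continuousWithinAt
    have hdiff : ∀ u ∈ Icc (0:ℝ) θ, |s N u - u| ≤ 2*M*θ^3/N := by
      intro u hu
      rw [hrepr u hu]
      have e1 : u - (∫ v in (0:ℝ)..u, (u - v) * (k v * s N v)) / N - u
          = -((∫ v in (0:ℝ)..u, (u - v) * (k v * s N v)) / N) := by ring
      rw [e1, abs_neg, abs_div, abs_of_pos hN0]
      rw [div_le_div_iff_of_pos_right hN0]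
      have hIb : |∫ v in (0:ℝ)..u, (u - v) * (k v * s N v)| ≤ θ * (M * (2*θ)) * |u - 0| := by
        rw [← Real.norm_eq_abs]
        apply intervalIntegral.norm_integral_le_of_norm_le_const
        intro v hv
        rw [uIoc_of_le hu.1] at hv
        have hvI : v ∈ Icc (0:ℝ) θ := ⟨hv.1.le, hv.2.trans hu.2⟩
        have e2 : |u - v| ≤ θ := by
          rw [abs_of_nonneg (by linarith [hv.2])]; linarith [hv.1, hu.2]
        calc ‖(u - v) * (k v * s N v)‖ = |u - v| * (|k v| * |s N v|) := by simp [abs_mul]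
          _ ≤ θ * (M * (2*θ)) :=
            mul_le_mul e2 (mul_le_mul (hM v hvI) (hb v hvI) (abs_nonneg _) hM0)
              (by positivity) hθ.le
      refine hIb.trans ?_
      have : |u - 0| ≤ θ := by rw [sub_zero, abs_of_nonneg hu.1]; exact hu.2
      calc θ * (M * (2*θ)) * |u - 0| ≤ θ * (M * (2*θ)) * θ := by gcongr
        _ = 2*M*θ^3 := by ring
    have hsub : uIcc (0:ℝ) r ⊆ Icc 0 θ := by
      rw [uIcc_of_le hr.1]; exact Icc_subset_Icc le_rfl hr.2
    have hi1 : IntervalIntegrable (fun u => (r-u)*(k u * s N u)) volume 0 r :=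
      (((continuous_const.sub continuous_id').continuousOn.mul
        (hk.continuousOn.mul (hscont.mono hsub)))).intervalIntegrable
    have hi2 : IntervalIntegrable (fun u => (r-u)*(k u * u)) volume 0 r :=
      ((continuous_const.sub continuous_id').mul
        (hk.mul continuous_id')).intervalIntegrable 0 r
    have hNr : N * (s N r - r) = -(∫ u in (0:ℝ)..r, (r - u)*(k u * s N u)) := by
      rw [hrepr r hr]; field_simp; ring
    rw [hNr, sub_neg_eq_add, neg_add_eq_sub, ← intervalIntegral.integral_sub hi2 hi1]
    refine le_trans (intervalIntegral.norm_integral_le_of_norm_le_const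
      (C := θ * (M * (2*M*θ^3/N))) ?_) ?_
    · intro u hu
      rw [uIoc_of_le hr.1] at hu
      have huI : u ∈ Icc (0:ℝ) θ := ⟨hu.1.le, hu.2.trans hr.2⟩
      have e2 : |r - u| ≤ θ := by
        rw [abs_of_nonneg (by linarith [hu.2])]; linarith [hu.1, hr.2]
      have e3 : (r - u) * (k u * u) - (r - u) * (k u * s N u)
          = (r - u) * (k u * -(s N u - u)) := by ring
      rw [e3]
      calc ‖(r - u) * (k u * -(s N u - u))‖ = |r - u| * (|k u| * |s N u - u|) := by
            simp [abs_mul, abs_sub_comm]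
        _ ≤ θ * (M * (2*M*θ^3/N)) :=
            mul_le_mul e2 (mul_le_mul (hM u huI) (hdiff u huI) (abs_nonneg _) hM0)
              (by positivity) hθ.le
    · have : |r - 0| ≤ θ := by
        rw [sub_zero, abs_of_nonneg hr.1]; exact hr.2
      calc θ * (M * (2*M*θ^3/N)) * |r - 0| ≤ θ * (M * (2*M*θ^3/N)) * θ := by gcongr
        _ = 2*M^2*θ^5/N := by field_simp
  · exact tendsto_const_nhds.div_atTop tendsto_id



lemma scale_integral (θ : ℝ) (hθ : θ ≠ 0) (c : ℝ) (h : ℝ → ℝ) :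
    ∫ u in (0:ℝ)..c*θ, h u = θ * ∫ z in (0:ℝ)..c, h (z*θ) := by
  rw [intervalIntegral.integral_comp_mul_right h hθ, smul_eq_mul, zero_mul, ← mul_assoc,
    mul_inv_cancel₀ hθ, one_mul]


end AuxiliaryLemmas

open MeasureTheory intervalIntegral in
/-- As `N → ∞`, `v_N(t) = N[σ_{(κ/N)⁻}^{(1-t)}(θ) + σ_{(κ/N)⁺}^{(t)}(θ) - 1]` converges
pointwise on `[0,1]` to `v(t) = ∫₀¹ g(s,t) κ(sθ)θ² ds`, the solution of `v'' + κ(tθ)θ² = 0`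
with `v(0) = v(1) = 0`. -/
theorem vN_tendsto_green (θ : ℝ) (hθ : 0 < θ)
    (κ : ℝ → ℝ) (hκ : ContinuousOn κ (Icc 0 θ))
    (sp sp' sm sm' : ℝ → ℝ → ℝ)
    (hsp : ∀ N > (0:ℝ), IsSinSolution (fun r => κ r / N) (sp N) (sp' N) θ ∧
      ∀ r ∈ Ioc (0:ℝ) θ, 0 < sp N r)
    (hsm : ∀ N > (0:ℝ), IsSinSolution (fun r => κ (θ - r) / N) (sm N) (sm' N) θ ∧
      ∀ r ∈ Ioc (0:ℝ) θ, 0 < sm N r) :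
    ∀ t ∈ Icc (0:ℝ) 1,
      Tendsto (fun N : ℝ => N * (sm N ((1 - t) * θ) / sm N θ + sp N (t * θ) / sp N θ - 1))
        atTop
        (nhds (∫ s in (0:ℝ)..1, (min s t * (1 - max s t)) * κ (s * θ) * θ ^ 2)) := by
  intro t ht
  obtain ⟨ht0, ht1⟩ := ht
  -- continuous extension of κ
  set kp : ℝ → ℝ := fun u => κ (clampI θ u) with hkpdef
  have hkpc : Continuous kp := hκ.comp_continuous (continuous_clampI θ) (clampI_mem θ hθ.le)
  have hkpeq : ∀ u ∈ Icc (0:ℝ) θ, kp u = κ u := fun u hu => by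
    simp only [hkpdef, clampI_eq hu]
  set km : ℝ → ℝ := fun u => kp (θ - u) with hkmdef
  have hkmc : Continuous km := hkpc.comp (continuous_const.sub continuous_id')
  -- a bound for kp
  obtain ⟨M, hMp⟩ : ∃ M, ∀ u ∈ Icc (0:ℝ) θ, |kp u| ≤ M := by
    obtain ⟨x₀, _, hmax⟩ := isCompact_Icc.exists_isMaxOn (nonempty_Icc.mpr hθ.le)
      (f := fun x => |kp x|) (hkpc.abs.continuousOn)
    exact ⟨|kp x₀|, fun u hu => hmax hu⟩
  have hMm : ∀ u ∈ Icc (0:ℝ) θ, |km u| ≤ M := fun u hu => by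
    simp only [hkmdef]
    exact hMp (θ - u) ⟨by linarith [hu.2], by linarith [hu.1]⟩
  -- convert the ODE hypotheses
  have hsP : ∀ N > (0:ℝ), sp N 0 = 0 ∧ sp' N 0 = 1 ∧ ∀ x ∈ Icc (0:ℝ) θ,
      HasDerivAt (sp N) (sp' N x) x ∧ HasDerivAt (sp' N) (-(kp x / N * sp N x)) x := by
    intro N hN
    obtain ⟨⟨h0, h1, hode⟩, _⟩ := hsp N hN
    refine ⟨h0, h1, fun x hx => ⟨(hode x hx).1, ?_⟩⟩
    have h2 := (hode x hx).2
    have e : -(κ x / N * sp N x) = -(kp x / N * sp N x) := by rw [hkpeq x hx]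
    exact e ▸ h2
  have hsM : ∀ N > (0:ℝ), sm N 0 = 0 ∧ sm' N 0 = 1 ∧ ∀ x ∈ Icc (0:ℝ) θ,
      HasDerivAt (sm N) (sm' N x) x ∧ HasDerivAt (sm' N) (-(km x / N * sm N x)) x := by
    intro N hN
    obtain ⟨⟨h0, h1, hode⟩, _⟩ := hsm N hN
    refine ⟨h0, h1, fun x hx => ⟨(hode x hx).1, ?_⟩⟩
    have h2 := (hode x hx).2
    have e : -(κ (θ - x) / N * sm N x) = -(km x / N * sm N x) := by
      simp only [hkmdef]
      rw [hkpeq (θ - x) ⟨by linarith [hx.2], by linarith [hx.1]⟩]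
    exact e ▸ h2
  -- membership facts
  have htθ : t * θ ∈ Icc (0:ℝ) θ := ⟨by positivity, by nlinarith⟩
  have ht'θ : (1 - t) * θ ∈ Icc (0:ℝ) θ := ⟨by nlinarith, by nlinarith⟩
  have hθθ : θ ∈ Icc (0:ℝ) θ := ⟨hθ.le, le_rfl⟩
  -- the four limits
  have Hp1 := sin_tendsto θ hθ kp hkpc M hMp sp sp' hsP (t*θ) htθ
  have Hp2 := sin_tendsto θ hθ kp hkpc M hMp sp sp' hsP θ hθθ
  have Hm1 := sin_tendsto θ hθ km hkmc M hMm sm sm' hsM ((1-t)*θ) ht'θ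
  have Hm2 := sin_tendsto θ hθ km hkmc M hMm sm sm' hsM θ hθθ
  -- denominators tend to θ
  have hden : ∀ (f : ℝ → ℝ → ℝ) (L : ℝ), Tendsto (fun N : ℝ => N * (f N θ - θ)) atTop (nhds L) →
      Tendsto (fun N : ℝ => f N θ) atTop (nhds θ) := by
    intro f L hL
    have h1 := hL.mul tendsto_inv_atTop_zero
    rw [mul_zero] at h1
    have h2 : Tendsto (fun N : ℝ => f N θ - θ) atTop (nhds 0) := by
      apply h1.congr'
      filter_upwards [eventually_gt_atTop (0:ℝ)] with N hN
      field_simp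
    have h3 := h2.add (tendsto_const_nhds (x := θ))
    rw [zero_add] at h3
    exact h3.congr (fun N => by ring)
  have hdp := hden sp _ Hp2
  have hdm := hden sm _ Hm2
  -- the combined limit
  have Hmain : Tendsto (fun N : ℝ =>
      (N * (sm N ((1-t)*θ) - (1-t)*θ) - (1-t) * (N * (sm N θ - θ))) / sm N θ
      + (N * (sp N (t*θ) - t*θ) - t * (N * (sp N θ - θ))) / sp N θ) atTop
      (nhds (((-∫ u in (0:ℝ)..(1-t)*θ, ((1-t)*θ - u) * (km u * u))
          - (1-t) * (-∫ u in (0:ℝ)..θ, (θ - u) * (km u * u))) / θ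
        + ((-∫ u in (0:ℝ)..t*θ, (t*θ - u) * (kp u * u))
          - t * (-∫ u in (0:ℝ)..θ, (θ - u) * (kp u * u))) / θ)) :=
    ((Hm1.sub (Hm2.const_mul (1-t))).div hdm hθ.ne').add
      ((Hp1.sub (Hp2.const_mul t)).div hdp hθ.ne')
  have Hgoal : Tendsto (fun N : ℝ =>
      N * (sm N ((1 - t) * θ) / sm N θ + sp N (t * θ) / sp N θ - 1)) atTop
      (nhds (((-∫ u in (0:ℝ)..(1-t)*θ, ((1-t)*θ - u) * (km u * u))
          - (1-t) * (-∫ u in (0:ℝ)..θ, (θ - u) * (km u * u))) / θ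
        + ((-∫ u in (0:ℝ)..t*θ, (t*θ - u) * (kp u * u))
          - t * (-∫ u in (0:ℝ)..θ, (θ - u) * (kp u * u))) / θ)) := by
    apply Hmain.congr'
    filter_upwards [eventually_gt_atTop (0:ℝ)] with N hN
    have hcm : 0 < sm N θ := (hsm N hN).2 θ ⟨hθ, le_rfl⟩
    have hcp : 0 < sp N θ := (hsp N hN).2 θ ⟨hθ, le_rfl⟩
    field_simp
    ring
  -- now identify the limit value
  convert Hgoal using 2
  -- the integral identity
  set k : ℝ → ℝ := fun a => kp (a*θ) with hkdef
  have hkc : Continuous k := hkpc.comp (continuous_id'.mul continuous_const)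
  -- transform the four A-integrals
  have ep1 : (∫ u in (0:ℝ)..t*θ, (t*θ - u) * (kp u * u))
      = θ^3 * ∫ z in (0:ℝ)..t, ((t-z)*z) * k z := by
    rw [scale_integral θ hθ.ne' t]
    have e : ∀ z : ℝ, (t*θ - z*θ) * (kp (z*θ) * (z*θ)) = (((t-z)*z) * k z) * θ^2 := by
      intro z; simp only [hkdef]; ring
    simp_rw [e, intervalIntegral.integral_mul_const]
    ring
  have ep2 : (∫ u in (0:ℝ)..θ, (θ - u) * (kp u * u))
      = θ^3 * ∫ z in (0:ℝ)..1, ((1-z)*z) * k z := by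
    have h1 := scale_integral θ hθ.ne' 1 (fun u => (θ - u) * (kp u * u))
    rw [one_mul] at h1
    rw [h1]
    have e : ∀ z : ℝ, (θ - z*θ) * (kp (z*θ) * (z*θ)) = (((1-z)*z) * k z) * θ^2 := by
      intro z; simp only [hkdef]; ring
    simp_rw [e, intervalIntegral.integral_mul_const]
    ring
  have em1 : (∫ u in (0:ℝ)..(1-t)*θ, ((1-t)*θ - u) * (km u * u))
      = θ^3 * ∫ z in t..1, ((z-t)*(1-z)) * k z := by
    rw [scale_integral θ hθ.ne' (1-t)]
    have e : ∀ z : ℝ, ((1-t)*θ - z*θ) * (km (z*θ) * (z*θ))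
        = (fun w => (((w-t)*(1-w)) * k w) * θ^2) (1 - z) := by
      intro z
      simp only [hkmdef, hkdef]
      rw [show θ - z*θ = (1-z)*θ from by ring]
      ring
    simp_rw [e]
    rw [intervalIntegral.integral_comp_sub_left (fun w => (((w-t)*(1-w)) * k w) * θ^2) 1]
    simp only [sub_sub_cancel, sub_zero]
    rw [intervalIntegral.integral_mul_const]
    ring
  have em2 : (∫ u in (0:ℝ)..θ, (θ - u) * (km u * u))
      = θ^3 * ∫ z in (0:ℝ)..1, ((1-z)*z) * k z := by
    have h1 := scale_integral θ hθ.ne' 1 (fun u => (θ - u) * (km u * u))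
    rw [one_mul] at h1
    rw [h1]
    have e : ∀ z : ℝ, (θ - z*θ) * (km (z*θ) * (z*θ))
        = (fun w => (((1-w)*w) * k w) * θ^2) (1 - z) := by
      intro z
      simp only [hkmdef, hkdef]
      rw [show θ - z*θ = (1-z)*θ from by ring]
      ring
    simp_rw [e]
    rw [intervalIntegral.integral_comp_sub_left (fun w => (((1-w)*w) * k w) * θ^2) 1]
    simp only [sub_self, sub_zero]
    rw [intervalIntegral.integral_mul_const]
    ring
  -- transform the target integral
  have hRHS1 : (∫ s in (0:ℝ)..1, (min s t * (1 - max s t)) * κ (s * θ) * θ ^ 2)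
      = ∫ s in (0:ℝ)..1, (min s t * (1 - max s t)) * k s * θ ^ 2 := by
    apply intervalIntegral.integral_congr
    intro s hs
    rw [uIcc_of_le zero_le_one] at hs
    have : s * θ ∈ Icc (0:ℝ) θ := ⟨mul_nonneg hs.1 hθ.le, by nlinarith [hs.2]⟩
    simp only [hkdef]
    rw [hkpeq (s*θ) this]
  -- integrability helpers
  have hcont1 : Continuous (fun s : ℝ => (min s t * (1 - max s t)) * k s * θ ^ 2) := by
    apply Continuous.mul _ continuous_const
    exact ((continuous_id'.min continuous_const).mul
      (continuous_const.sub (continuous_id'.max continuous_const))).mul hkc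
  have hsplit : (∫ s in (0:ℝ)..1, (min s t * (1 - max s t)) * k s * θ ^ 2)
      = (∫ s in (0:ℝ)..t, (min s t * (1 - max s t)) * k s * θ ^ 2)
      + ∫ s in t..1, (min s t * (1 - max s t)) * k s * θ ^ 2 :=
    (intervalIntegral.integral_add_adjacent_intervals
      (hcont1.intervalIntegrable 0 t) (hcont1.intervalIntegrable t 1)).symm
  have hpiece1 : (∫ s in (0:ℝ)..t, (min s t * (1 - max s t)) * k s * θ ^ 2)
      = (∫ s in (0:ℝ)..t, (s*(1-t)) * k s) * θ^2 := by
    rw [← intervalIntegral.integral_mul_const]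
    apply intervalIntegral.integral_congr
    intro s hs
    rw [uIcc_of_le ht0] at hs
    simp only [min_eq_left hs.2, max_eq_right hs.2]
  have hpiece2 : (∫ s in t..1, (min s t * (1 - max s t)) * k s * θ ^ 2)
      = (∫ s in t..1, (t*(1-s)) * k s) * θ^2 := by
    rw [← intervalIntegral.integral_mul_const]
    apply intervalIntegral.integral_congr
    intro s hs
    rw [uIcc_of_le ht1] at hs
    simp only [min_eq_right hs.1, max_eq_left hs.1]
  -- split Q
  have hcontQ : Continuous (fun s : ℝ => ((1-s)*s) * k s) := by
    exact ((continuous_const.sub continuous_id').mul continuous_id').mul hkc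
  have hQ : (∫ z in (0:ℝ)..1, ((1-z)*z) * k z)
      = (∫ z in (0:ℝ)..t, ((1-z)*z) * k z) + ∫ z in t..1, ((1-z)*z) * k z :=
    (intervalIntegral.integral_add_adjacent_intervals
      (hcontQ.intervalIntegrable 0 t) (hcontQ.intervalIntegrable t 1)).symm
  -- relate pieces
  have hcontP : Continuous (fun z : ℝ => ((t-z)*z) * k z) := by
    exact ((continuous_const.sub continuous_id').mul continuous_id').mul hkc
  have hcontR : Continuous (fun z : ℝ => ((z-t)*(1-z)) * k z) := by
    exact ((continuous_id'.sub continuous_const).mul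
      (continuous_const.sub continuous_id')).mul hkc
  have hU1 : (∫ s in (0:ℝ)..t, (s*(1-t)) * k s)
      = (∫ z in (0:ℝ)..t, ((1-z)*z) * k z) - ∫ z in (0:ℝ)..t, ((t-z)*z) * k z := by
    rw [← intervalIntegral.integral_sub (hcontQ.intervalIntegrable 0 t)
      (hcontP.intervalIntegrable 0 t)]
    apply intervalIntegral.integral_congr
    intro s _
    ring
  have hU2 : (∫ s in t..1, (t*(1-s)) * k s)
      = (∫ z in t..1, ((1-z)*z) * k z) - ∫ z in t..1, ((z-t)*(1-z)) * k z := by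
    rw [← intervalIntegral.integral_sub (hcontQ.intervalIntegrable t 1)
      (hcontR.intervalIntegrable t 1)]
    apply intervalIntegral.integral_congr
    intro s _
    ring
  rw [hRHS1, hsplit, hpiece1, hpiece2, hU1, hU2, ep1, ep2, em1, em2, hQ]
  field_simp
  ring
end
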